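/- arXiv:2510.06656 — 3 statements merged into one kernel-verified Lean document; each statement's English description precedes it below -/
import Mathlib

section
/- Velocity averaging against test functions of subcubic growth under uniform third-moment bounds (intermediate claim in the proof of Lemma 3.12 / Lemma lem:subcubic). Let d ≥ 1, T > 0, and let Ω ⊆ ℝ^d be an open set. Suppose (f_m) is a sequence of nonnegative integrable functions on (0,T)×Ω×ℝ^d converging weakly in L¹ to f, that for each continuous compactly supported ψ : ℝ^d → ℝ the velocity averages (t,x) ↦ ∫_{ℝ^d} f_m(t,x,v)ψ(v) dv converge in L¹((0,T)×Ω), and that sup_m ∫_{(0,T)×Ω×ℝ^d} |v|³ f_m(t,x,v) dt dx dv < ∞. Then for every continuous φ : ℝ^d → ℝ of subcubic growth, i.e. such that |φ(v)|/(1+|v|)³ → 0 as |v| → ∞, the averages ∫_{ℝ^d} f_m(t,x,v) φ(v) dv converge to ∫_{ℝ^d} f(t,x,v) φ(v) dv in L¹((0,T)×Ω). -/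
open MeasureTheory Filter Topology
open scoped ENNReal

/-- The restricted Lebesgue measure on `(0,T) × Ω × ℝ^d`. -/
noncomputable def kineticMeasure (d : ℕ) (T : ℝ) (Ω : Set (EuclideanSpace ℝ (Fin d))) :
    Measure (ℝ × EuclideanSpace ℝ (Fin d) × EuclideanSpace ℝ (Fin d)) :=
  volume.restrict ((Set.Ioo (0 : ℝ) T) ×ˢ (Ω ×ˢ (Set.univ : Set (EuclideanSpace ℝ (Fin d)))))

/-- The restricted Lebesgue measure on `(0,T) × Ω`. -/
noncomputable def baseMeasure (d : ℕ) (T : ℝ) (Ω : Set (EuclideanSpace ℝ (Fin d))) :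
    Measure (ℝ × EuclideanSpace ℝ (Fin d)) :=
  volume.restrict ((Set.Ioo (0 : ℝ) T) ×ˢ Ω)

/-- The velocity average `(t,x) ↦ ∫_{ℝ^d} f(t,x,v) ψ(v) dv`. -/
noncomputable def velAvg {d : ℕ}
    (f : ℝ × EuclideanSpace ℝ (Fin d) × EuclideanSpace ℝ (Fin d) → ℝ)
    (ψ : EuclideanSpace ℝ (Fin d) → ℝ)
    (p : ℝ × EuclideanSpace ℝ (Fin d)) : ℝ :=
  ∫ v, f (p.1, p.2, v) * ψ v


instance (d : ℕ) (T : ℝ) (Ω : Set (EuclideanSpace ℝ (Fin d))) :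
    SigmaFinite (baseMeasure d T Ω) := by
  unfold baseMeasure; infer_instance

lemma mp_assoc (d : ℕ) (T : ℝ) (Ω : Set (EuclideanSpace ℝ (Fin d))) :
    MeasurePreserving (MeasurableEquiv.prodAssoc :
        (ℝ × EuclideanSpace ℝ (Fin d)) × EuclideanSpace ℝ (Fin d) ≃ᵐ
        ℝ × EuclideanSpace ℝ (Fin d) × EuclideanSpace ℝ (Fin d))
      ((baseMeasure d T Ω).prod volume) (kineticMeasure d T Ω) := by
  have h1 : (baseMeasure d T Ω).prod (volume : Measure (EuclideanSpace ℝ (Fin d))) =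
      (((volume : Measure ℝ).prod (volume : Measure (EuclideanSpace ℝ (Fin d)))).prod
        (volume : Measure (EuclideanSpace ℝ (Fin d)))).restrict
        (((Set.Ioo (0:ℝ) T) ×ˢ Ω) ×ˢ Set.univ) := by
    rw [baseMeasure, ← Measure.volume_eq_prod, Measure.restrict_prod_eq_prod_univ]
  have h2 : kineticMeasure d T Ω =
      ((volume : Measure ℝ).prod ((volume : Measure (EuclideanSpace ℝ (Fin d))).prod
        (volume : Measure (EuclideanSpace ℝ (Fin d))))).restrict
        ((Set.Ioo (0:ℝ) T) ×ˢ (Ω ×ˢ Set.univ)) := by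
    rw [kineticMeasure, ← Measure.volume_eq_prod, ← Measure.volume_eq_prod]
  rw [h1, h2]
  have him : (MeasurableEquiv.prodAssoc '' (((Set.Ioo (0:ℝ) T) ×ˢ Ω) ×ˢ
      (Set.univ : Set (EuclideanSpace ℝ (Fin d))))) =
      (Set.Ioo (0:ℝ) T) ×ˢ (Ω ×ˢ (Set.univ : Set (EuclideanSpace ℝ (Fin d)))) := by
    ext ⟨t, x, v⟩
    simp [MeasurableEquiv.prodAssoc, Equiv.prodAssoc]
  rw [← him]
  exact (measurePreserving_prodAssoc _ _ _).restrict_image_emb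
    (MeasurableEquiv.prodAssoc).measurableEmbedding _

lemma lintegral_kinetic {d : ℕ} {T : ℝ} {Ω : Set (EuclideanSpace ℝ (Fin d))}
    (F : ℝ × EuclideanSpace ℝ (Fin d) × EuclideanSpace ℝ (Fin d) → ℝ≥0∞)
    (hF : Measurable F) :
    ∫⁻ q, F q ∂(kineticMeasure d T Ω) =
    ∫⁻ p, ∫⁻ v, F (p.1, p.2, v) ∂volume ∂(baseMeasure d T Ω) := by
  rw [← (mp_assoc d T Ω).lintegral_comp hF]
  exact lintegral_prod _ (hF.comp (MeasurableEquiv.prodAssoc).measurable).aemeasurable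

lemma integrable_assoc {d : ℕ} {T : ℝ} {Ω : Set (EuclideanSpace ℝ (Fin d))}
    (F : ℝ × EuclideanSpace ℝ (Fin d) × EuclideanSpace ℝ (Fin d) → ℝ)
    (hF : Integrable F (kineticMeasure d T Ω)) :
    Integrable (fun z : (ℝ × EuclideanSpace ℝ (Fin d)) × EuclideanSpace ℝ (Fin d) =>
      F (z.1.1, z.1.2, z.2)) ((baseMeasure d T Ω).prod volume) := by
  exact ((mp_assoc d T Ω).integrable_comp_emb
    (MeasurableEquiv.prodAssoc).measurableEmbedding (g := F)).mpr hF

lemma integral_kinetic {d : ℕ} {T : ℝ} {Ω : Set (EuclideanSpace ℝ (Fin d))}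
    (F : ℝ × EuclideanSpace ℝ (Fin d) × EuclideanSpace ℝ (Fin d) → ℝ)
    (hF : Integrable F (kineticMeasure d T Ω)) :
    ∫ q, F q ∂(kineticMeasure d T Ω) =
    ∫ p, ∫ v, F (p.1, p.2, v) ∂volume ∂(baseMeasure d T Ω) := by
  rw [← (mp_assoc d T Ω).integral_comp (MeasurableEquiv.prodAssoc).measurableEmbedding]
  exact integral_prod _ (integrable_assoc F hF)

lemma integrable_velAvg' {d : ℕ} {T : ℝ} {Ω : Set (EuclideanSpace ℝ (Fin d))}
    (F : ℝ × EuclideanSpace ℝ (Fin d) × EuclideanSpace ℝ (Fin d) → ℝ)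
    (hF : Integrable F (kineticMeasure d T Ω)) :
    Integrable (fun p => ∫ v, F (p.1, p.2, v) ∂volume) (baseMeasure d T Ω) :=
  (integrable_assoc F hF).integral_prod_left

lemma measurable_velAvg {d : ℕ}
    (f : ℝ × EuclideanSpace ℝ (Fin d) × EuclideanSpace ℝ (Fin d) → ℝ)
    (ψ : EuclideanSpace ℝ (Fin d) → ℝ) (hf : Measurable f) (hψ : Measurable ψ) :
    StronglyMeasurable (velAvg f ψ) := by
  have : StronglyMeasurable
      (fun z : (ℝ × EuclideanSpace ℝ (Fin d)) × EuclideanSpace ℝ (Fin d) =>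
        f (z.1.1, z.1.2, z.2) * ψ z.2) := by
    apply Measurable.stronglyMeasurable
    exact ((hf.comp (by fun_prop)).mul (hψ.comp measurable_snd))
  exact this.integral_prod_right'

/-- pointwise numeric fact -/

lemma cube_bound (r : ℝ) (hr : 0 ≤ r) : (1 + r) ^ 3 ≤ 4 + 4 * r ^ 3 := by nlinarith [sq_nonneg (r - 1), sq_nonneg r]

lemma ae_slice_nonneg {d : ℕ} {T : ℝ} {Ω : Set (EuclideanSpace ℝ (Fin d))}
    (h : ℝ × EuclideanSpace ℝ (Fin d) × EuclideanSpace ℝ (Fin d) → ℝ)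
    (hmeas : Measurable h) (hpos : 0 ≤ᵐ[kineticMeasure d T Ω] h) :
    ∀ᵐ p ∂(baseMeasure d T Ω), ∀ᵐ v ∂(volume : Measure (EuclideanSpace ℝ (Fin d))),
      0 ≤ h (p.1, p.2, v) := by
  have h0 : ∀ᵐ q ∂(kineticMeasure d T Ω), 0 ≤ h q := hpos
  rw [show kineticMeasure d T Ω = Measure.map (⇑MeasurableEquiv.prodAssoc)
      ((baseMeasure d T Ω).prod volume) from (mp_assoc d T Ω).map_eq.symm,
    ae_map_iff (MeasurableEquiv.prodAssoc).measurable.aemeasurable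
      (measurableSet_le measurable_const hmeas)] at h0
  exact Measure.ae_ae_of_ae_prod h0

lemma tail_bound {d : ℕ} {T : ℝ} {Ω : Set (EuclideanSpace ℝ (Fin d))}
    (h : ℝ × EuclideanSpace ℝ (Fin d) × EuclideanSpace ℝ (Fin d) → ℝ)
    (hmeas : Measurable h) (hint : Integrable h (kineticMeasure d T Ω))
    (hpos : 0 ≤ᵐ[kineticMeasure d T Ω] h)
    (hmom : ∫⁻ q, ENNReal.ofReal (‖q.2.2‖ ^ 3 * h q) ∂(kineticMeasure d T Ω) ≠ ⊤)
    (φ ψ : EuclideanSpace ℝ (Fin d) → ℝ) (hφm : Measurable φ) (hψm : Measurable ψ)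
    (Kb : ℝ) (hφK : ∀ v, |φ v| ≤ Kb * (1 + ‖v‖) ^ 3) (hψK : ∀ v, |ψ v| ≤ Kb * (1 + ‖v‖) ^ 3)
    (δ : ℝ) (hδ : 0 ≤ δ) (hbound : ∀ v, |φ v - ψ v| ≤ δ * (1 + ‖v‖) ^ 3) :
    ∫⁻ p, ENNReal.ofReal |velAvg h φ p - velAvg h ψ p| ∂(baseMeasure d T Ω) ≤
      ENNReal.ofReal δ *
        (4 * ∫⁻ q, ENNReal.ofReal (h q) ∂(kineticMeasure d T Ω) +
         4 * ∫⁻ q, ENNReal.ofReal (‖q.2.2‖ ^ 3 * h q) ∂(kineticMeasure d T Ω)) := by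
  classical
  -- a.e. slice facts
  have hae1 : ∀ᵐ p ∂(baseMeasure d T Ω), Integrable (fun v => h (p.1, p.2, v)) volume :=
    (integrable_assoc h hint).prod_right_ae
  have hmom_meas : Measurable (fun q : ℝ × EuclideanSpace ℝ (Fin d) × EuclideanSpace ℝ (Fin d)
      => ENNReal.ofReal (‖q.2.2‖ ^ 3 * h q)) := by
    apply ENNReal.measurable_ofReal.comp
    exact ((measurable_snd.comp measurable_snd).norm.pow measurable_const).mul hmeas
  have hmom' : ∫⁻ p, (∫⁻ v, ENNReal.ofReal (‖v‖ ^ 3 * h (p.1, p.2, v)) ∂volume) ∂(baseMeasure d T Ω) ≠ ⊤ := by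
    rw [← lintegral_kinetic _ hmom_meas]; exact hmom
  have hinner_meas : Measurable (fun p : ℝ × EuclideanSpace ℝ (Fin d) =>
      ∫⁻ v, ENNReal.ofReal (‖v‖ ^ 3 * h (p.1, p.2, v)) ∂volume) := by
    apply Measurable.lintegral_prod_right'
      (f := fun z : (ℝ × EuclideanSpace ℝ (Fin d)) × EuclideanSpace ℝ (Fin d) =>
        ENNReal.ofReal (‖z.2‖ ^ 3 * h (z.1.1, z.1.2, z.2)))
    apply ENNReal.measurable_ofReal.comp
    exact ((measurable_snd.norm.pow measurable_const)).mul (hmeas.comp (by fun_prop))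
  have hae2 : ∀ᵐ p ∂(baseMeasure d T Ω), (∫⁻ v, ENNReal.ofReal (‖v‖ ^ 3 * h (p.1, p.2, v)) ∂volume) ≠ ⊤ := by
    have := ae_lt_top hinner_meas hmom'
    filter_upwards [this] with p hp using hp.ne
  have hae3 := ae_slice_nonneg h hmeas hpos
  -- pointwise bound
  have key : ∀ᵐ p ∂(baseMeasure d T Ω), ENNReal.ofReal |velAvg h φ p - velAvg h ψ p| ≤
      ENNReal.ofReal δ * ∫⁻ v, ENNReal.ofReal ((1 + ‖v‖) ^ 3 * h (p.1, p.2, v)) ∂volume := by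
    filter_upwards [hae1, hae2, hae3] with p hp1 hp2 hp3
    have hsm : AEStronglyMeasurable (fun v => h (p.1, p.2, v))
        (volume : Measure (EuclideanSpace ℝ (Fin d))) :=
      (hmeas.comp (by fun_prop : Measurable fun v : EuclideanSpace ℝ (Fin d) =>
        ((p.1, p.2, v) : ℝ × EuclideanSpace ℝ (Fin d) × EuclideanSpace ℝ (Fin d)))).aestronglyMeasurable
    -- integrability of the cubic-weighted slice
    have hInt3 : Integrable (fun v => ‖v‖ ^ 3 * h (p.1, p.2, v)) volume := by
      refine ⟨(measurable_norm.pow measurable_const).aestronglyMeasurable.mul hsm, ?_⟩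
      rw [hasFiniteIntegral_iff_ofReal ?pos]
      · exact hp2.lt_top
      case pos =>
        filter_upwards [hp3] with v hv using mul_nonneg (by positivity) hv
    have hIntc : Integrable (fun v => (1 + ‖v‖) ^ 3 * h (p.1, p.2, v)) volume := by
      refine Integrable.mono' (((hp1.const_mul 4)).add (hInt3.const_mul 4))
        (((continuous_const.add continuous_norm).pow 3).aestronglyMeasurable.mul hsm) ?_
      filter_upwards [hp3] with v hv
      have hb := cube_bound ‖v‖ (norm_nonneg v)
      have : (1 + ‖v‖) ^ 3 * h (p.1, p.2, v) ≤ 4 * h (p.1, p.2, v) + 4 * (‖v‖ ^ 3 * h (p.1, p.2, v)) := by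
        nlinarith [hv, norm_nonneg v, pow_nonneg (norm_nonneg v) 3]
      rw [Real.norm_eq_abs, abs_of_nonneg (mul_nonneg (by positivity) hv)]
      simp only [Pi.add_apply]
      linarith
    have hIntφ : Integrable (fun v => h (p.1, p.2, v) * φ v) volume := by
      refine Integrable.mono' (hIntc.const_mul Kb) (hsm.mul hφm.aestronglyMeasurable) ?_
      filter_upwards [hp3] with v hv
      rw [Real.norm_eq_abs, abs_mul, abs_of_nonneg hv]
      calc h (p.1, p.2, v) * |φ v| ≤ h (p.1, p.2, v) * (Kb * (1 + ‖v‖) ^ 3) :=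
            mul_le_mul_of_nonneg_left (hφK v) hv
        _ = Kb * ((1 + ‖v‖) ^ 3 * h (p.1, p.2, v)) := by ring
    have hIntψ : Integrable (fun v => h (p.1, p.2, v) * ψ v) volume := by
      refine Integrable.mono' (hIntc.const_mul Kb) (hsm.mul hψm.aestronglyMeasurable) ?_
      filter_upwards [hp3] with v hv
      rw [Real.norm_eq_abs, abs_mul, abs_of_nonneg hv]
      calc h (p.1, p.2, v) * |ψ v| ≤ h (p.1, p.2, v) * (Kb * (1 + ‖v‖) ^ 3) :=
            mul_le_mul_of_nonneg_left (hψK v) hv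
        _ = Kb * ((1 + ‖v‖) ^ 3 * h (p.1, p.2, v)) := by ring
    have hdiff : velAvg h φ p - velAvg h ψ p
        = ∫ v, (h (p.1, p.2, v) * φ v - h (p.1, p.2, v) * ψ v) := by
      rw [velAvg, velAvg, integral_sub hIntφ hIntψ]
    rw [hdiff, ← Real.enorm_eq_ofReal_abs]
    calc (‖∫ v, (h (p.1, p.2, v) * φ v - h (p.1, p.2, v) * ψ v)‖₊ : ℝ≥0∞)
        ≤ ∫⁻ v, ‖h (p.1, p.2, v) * φ v - h (p.1, p.2, v) * ψ v‖₊ ∂volume :=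
          enorm_integral_le_lintegral_enorm _
      _ ≤ ∫⁻ v, ENNReal.ofReal (δ * ((1 + ‖v‖) ^ 3 * h (p.1, p.2, v))) ∂volume := by
          apply lintegral_mono_ae
          filter_upwards [hp3] with v hv
          rw [← enorm_eq_nnnorm, Real.enorm_eq_ofReal_abs]
          apply ENNReal.ofReal_le_ofReal
          have : |h (p.1, p.2, v) * φ v - h (p.1, p.2, v) * ψ v|
              = h (p.1, p.2, v) * |φ v - ψ v| := by
            rw [← mul_sub, abs_mul, abs_of_nonneg hv]
          rw [this]
          calc h (p.1, p.2, v) * |φ v - ψ v| ≤ h (p.1, p.2, v) * (δ * (1 + ‖v‖) ^ 3) :=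
                mul_le_mul_of_nonneg_left (hbound v) hv
            _ = δ * ((1 + ‖v‖) ^ 3 * h (p.1, p.2, v)) := by ring
      _ = ENNReal.ofReal δ * ∫⁻ v, ENNReal.ofReal ((1 + ‖v‖) ^ 3 * h (p.1, p.2, v)) ∂volume := by
          rw [← lintegral_const_mul' _ _ ENNReal.ofReal_ne_top]
          congr 1 with v
          rw [ENNReal.ofReal_mul hδ]
  -- integrate over p
  have hWmeas : Measurable (fun p : ℝ × EuclideanSpace ℝ (Fin d) =>
      ∫⁻ v, ENNReal.ofReal ((1 + ‖v‖) ^ 3 * h (p.1, p.2, v)) ∂volume) := by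
    apply Measurable.lintegral_prod_right'
      (f := fun z : (ℝ × EuclideanSpace ℝ (Fin d)) × EuclideanSpace ℝ (Fin d) =>
        ENNReal.ofReal ((1 + ‖z.2‖) ^ 3 * h (z.1.1, z.1.2, z.2)))
    apply ENNReal.measurable_ofReal.comp
    exact (((measurable_const.add measurable_snd.norm).pow measurable_const)).mul
      (hmeas.comp (by fun_prop))
  calc ∫⁻ p, ENNReal.ofReal |velAvg h φ p - velAvg h ψ p| ∂(baseMeasure d T Ω)
      ≤ ∫⁻ p, ENNReal.ofReal δ *
          ∫⁻ v, ENNReal.ofReal ((1 + ‖v‖) ^ 3 * h (p.1, p.2, v)) ∂volume ∂(baseMeasure d T Ω) :=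
        lintegral_mono_ae key
    _ = ENNReal.ofReal δ * ∫⁻ p,
          ∫⁻ v, ENNReal.ofReal ((1 + ‖v‖) ^ 3 * h (p.1, p.2, v)) ∂volume ∂(baseMeasure d T Ω) :=
        lintegral_const_mul' _ _ ENNReal.ofReal_ne_top
    _ = ENNReal.ofReal δ * ∫⁻ q, ENNReal.ofReal ((1 + ‖q.2.2‖) ^ 3 * h q) ∂(kineticMeasure d T Ω) := by
        congr 1
        refine (lintegral_kinetic (fun q => ENNReal.ofReal ((1 + ‖q.2.2‖) ^ 3 * h q)) ?_).symm
        apply ENNReal.measurable_ofReal.comp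
        exact (((measurable_const.add (measurable_snd.comp measurable_snd).norm).pow
          measurable_const)).mul hmeas
    _ ≤ ENNReal.ofReal δ * (4 * ∫⁻ q, ENNReal.ofReal (h q) ∂(kineticMeasure d T Ω) +
          4 * ∫⁻ q, ENNReal.ofReal (‖q.2.2‖ ^ 3 * h q) ∂(kineticMeasure d T Ω)) := by
        apply mul_le_mul_right ?_ _
        calc ∫⁻ q, ENNReal.ofReal ((1 + ‖q.2.2‖) ^ 3 * h q) ∂(kineticMeasure d T Ω)
            ≤ ∫⁻ q, (4 * ENNReal.ofReal (h q) + 4 * ENNReal.ofReal (‖q.2.2‖ ^ 3 * h q)) ∂(kineticMeasure d T Ω) := by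
              apply lintegral_mono_ae
              filter_upwards [hpos] with q hq
              replace hq : 0 ≤ h q := hq
              calc ENNReal.ofReal ((1 + ‖q.2.2‖) ^ 3 * h q)
                  ≤ ENNReal.ofReal (4 * h q + 4 * (‖q.2.2‖ ^ 3 * h q)) := by
                    apply ENNReal.ofReal_le_ofReal
                    nlinarith [cube_bound ‖q.2.2‖ (norm_nonneg q.2.2), hq,
                      pow_nonneg (norm_nonneg q.2.2) 3]
                _ ≤ ENNReal.ofReal (4 * h q) + ENNReal.ofReal (4 * (‖q.2.2‖ ^ 3 * h q)) :=
                    ENNReal.ofReal_add_le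
                _ = 4 * ENNReal.ofReal (h q) + 4 * ENNReal.ofReal (‖q.2.2‖ ^ 3 * h q) := by
                    rw [ENNReal.ofReal_mul (by norm_num), ENNReal.ofReal_mul (by norm_num)]
                    norm_num
          _ = 4 * ∫⁻ q, ENNReal.ofReal (h q) ∂(kineticMeasure d T Ω) +
              4 * ∫⁻ q, ENNReal.ofReal (‖q.2.2‖ ^ 3 * h q) ∂(kineticMeasure d T Ω) := by
              rw [lintegral_add_left, lintegral_const_mul, lintegral_const_mul]
              · exact hmom_meas
              · exact ENNReal.measurable_ofReal.comp hmeas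
              · exact (ENNReal.measurable_ofReal.comp hmeas).const_mul 4

lemma velAvg_mul {d : ℕ} {T : ℝ} {Ω : Set (EuclideanSpace ℝ (Fin d))}
    (f : ℝ × EuclideanSpace ℝ (Fin d) × EuclideanSpace ℝ (Fin d) → ℝ)
    (hf : Integrable f (kineticMeasure d T Ω))
    (ψ : EuclideanSpace ℝ (Fin d) → ℝ) (hψm : Measurable ψ)
    (Bψ : ℝ) (hψb : ∀ v, |ψ v| ≤ Bψ)
    (h : ℝ × EuclideanSpace ℝ (Fin d) → ℝ) (hhm : Measurable h)
    (Bh : ℝ) (hhb : ∀ p, |h p| ≤ Bh) :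
    ∫ q, f q * (ψ q.2.2 * h (q.1, q.2.1)) ∂(kineticMeasure d T Ω) =
    ∫ p, velAvg f ψ p * h p ∂(baseMeasure d T Ω) := by
  have hwm : Measurable (fun q : ℝ × EuclideanSpace ℝ (Fin d) × EuclideanSpace ℝ (Fin d) =>
      ψ q.2.2 * h (q.1, q.2.1)) :=
    (hψm.comp (measurable_snd.comp measurable_snd)).mul (hhm.comp (by fun_prop))
  have hbint : Integrable (fun q => f q * (ψ q.2.2 * h (q.1, q.2.1))) (kineticMeasure d T Ω) := by
    have h1 : Integrable (fun q => (ψ q.2.2 * h (q.1, q.2.1)) * f q) (kineticMeasure d T Ω) := by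
      refine hf.bdd_mul hwm.aestronglyMeasurable (c := Bψ * Bh) (Filter.Eventually.of_forall fun q => ?_)
      rw [Real.norm_eq_abs, abs_mul]
      have h0 : (0:ℝ) ≤ Bψ := le_trans (abs_nonneg _) (hψb q.2.2)
      exact mul_le_mul (hψb _) (hhb _) (abs_nonneg _) h0
    exact h1.congr (Filter.Eventually.of_forall fun q => by ring)
  rw [integral_kinetic _ hbint]
  refine integral_congr_ae (Filter.Eventually.of_forall fun p => ?_)
  have harr : ∀ v : EuclideanSpace ℝ (Fin d),
      f (p.1, p.2, v) * (ψ v * h (p.1, p.2)) = (f (p.1, p.2, v) * ψ v) * h (p.1, p.2) :=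
    fun v => by ring
  calc ∫ v, f (p.1, p.2, v) * (ψ v * h ((p.1, p.2, v).1, (p.1, p.2, v).2.1)) ∂volume
      = ∫ v, (f (p.1, p.2, v) * ψ v) * h (p.1, p.2) ∂volume := by
        exact integral_congr_ae (Filter.Eventually.of_forall fun v => harr v)
    _ = (∫ v, f (p.1, p.2, v) * ψ v) * h (p.1, p.2) := integral_mul_const _ _
    _ = velAvg f ψ p * h p := by rw [velAvg, Prod.mk.eta]

set_option maxHeartbeats 1000000 in
lemma identify {d : ℕ} {T : ℝ} {Ω : Set (EuclideanSpace ℝ (Fin d))}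
    (f : ℕ → ℝ × EuclideanSpace ℝ (Fin d) × EuclideanSpace ℝ (Fin d) → ℝ)
    (flim : ℝ × EuclideanSpace ℝ (Fin d) × EuclideanSpace ℝ (Fin d) → ℝ)
    (hf_meas : ∀ m, Measurable (f m))
    (hf_int : ∀ m, Integrable (f m) (kineticMeasure d T Ω))
    (hflim_meas : Measurable flim)
    (hflim_int : Integrable flim (kineticMeasure d T Ω))
    (hweak : ∀ φ : ℝ × EuclideanSpace ℝ (Fin d) × EuclideanSpace ℝ (Fin d) → ℝ,
      Measurable φ → (∃ C : ℝ, ∀ q, |φ q| ≤ C) →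
      Tendsto (fun m => ∫ q, f m q * φ q ∂(kineticMeasure d T Ω)) atTop
        (𝓝 (∫ q, flim q * φ q ∂(kineticMeasure d T Ω))))
    (ψ : EuclideanSpace ℝ (Fin d) → ℝ) (hψc : Continuous ψ) (hψs : HasCompactSupport ψ)
    (g : ℝ × EuclideanSpace ℝ (Fin d) → ℝ) (hg : Integrable g (baseMeasure d T Ω))
    (htend : Tendsto (fun m => ∫ p, |velAvg (f m) ψ p - g p| ∂(baseMeasure d T Ω)) atTop (𝓝 0)) :
    velAvg flim ψ =ᵐ[baseMeasure d T Ω] g := by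
  classical
  obtain ⟨Bψ, hψb⟩ := hψs.exists_bound_of_continuous hψc
  simp only [Real.norm_eq_abs] at hψb
  have hψm : Measurable ψ := hψc.measurable
  have hvAint : ∀ m, Integrable (velAvg (f m) ψ) (baseMeasure d T Ω) := by
    intro m
    have : Integrable (fun q => f m q * ψ q.2.2) (kineticMeasure d T Ω) := by
      have h1 : Integrable (fun q => ψ q.2.2 * f m q) (kineticMeasure d T Ω) :=
        (hf_int m).bdd_mul (hψm.comp (measurable_snd.comp measurable_snd)).aestronglyMeasurable
          (c := Bψ) (Filter.Eventually.of_forall fun q => by rw [Real.norm_eq_abs]; exact hψb _)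
      exact h1.congr (Filter.Eventually.of_forall fun q => by ring)
    exact integrable_velAvg' (fun q => f m q * ψ q.2.2) this
  have hvAlim_int : Integrable (velAvg flim ψ) (baseMeasure d T Ω) := by
    have : Integrable (fun q => flim q * ψ q.2.2) (kineticMeasure d T Ω) := by
      have h1 : Integrable (fun q => ψ q.2.2 * flim q) (kineticMeasure d T Ω) :=
        hflim_int.bdd_mul (hψm.comp (measurable_snd.comp measurable_snd)).aestronglyMeasurable
          (c := Bψ) (Filter.Eventually.of_forall fun q => by rw [Real.norm_eq_abs]; exact hψb _)
      exact h1.congr (Filter.Eventually.of_forall fun q => by ring)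
    exact integrable_velAvg' (fun q => flim q * ψ q.2.2) this
  -- the weak identification step for bounded measurable weights
  have claim : ∀ (h : ℝ × EuclideanSpace ℝ (Fin d) → ℝ), Measurable h →
      ∀ Bh : ℝ, (∀ p, |h p| ≤ Bh) →
      ∫ p, velAvg flim ψ p * h p ∂(baseMeasure d T Ω) =
      ∫ p, g p * h p ∂(baseMeasure d T Ω) := by
    intro h hhm Bh hhb
    have hBh0 : 0 ≤ Bh := le_trans (abs_nonneg _) (hhb (0, 0))
    have h1 : Tendsto (fun m => ∫ p, velAvg (f m) ψ p * h p ∂(baseMeasure d T Ω)) atTop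
        (𝓝 (∫ p, velAvg flim ψ p * h p ∂(baseMeasure d T Ω))) := by
      have hw := hweak (fun q => ψ q.2.2 * h (q.1, q.2.1))
        ((hψm.comp (measurable_snd.comp measurable_snd)).mul (hhm.comp (by fun_prop)))
        ⟨Bψ * Bh, fun q => by
          rw [abs_mul]
          exact mul_le_mul (hψb _) (hhb _) (abs_nonneg _)
            (le_trans (abs_nonneg _) (hψb q.2.2))⟩
      have e1 : ∀ m, ∫ q, f m q * (ψ q.2.2 * h (q.1, q.2.1)) ∂(kineticMeasure d T Ω) =
          ∫ p, velAvg (f m) ψ p * h p ∂(baseMeasure d T Ω) := fun m =>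
        velAvg_mul (f m) (hf_int m) ψ hψm Bψ hψb h hhm Bh hhb
      have e2 : ∫ q, flim q * (ψ q.2.2 * h (q.1, q.2.1)) ∂(kineticMeasure d T Ω) =
          ∫ p, velAvg flim ψ p * h p ∂(baseMeasure d T Ω) :=
        velAvg_mul flim hflim_int ψ hψm Bψ hψb h hhm Bh hhb
      rw [← e2]
      exact hw.congr e1
    have h2 : Tendsto (fun m => ∫ p, velAvg (f m) ψ p * h p ∂(baseMeasure d T Ω)) atTop
        (𝓝 (∫ p, g p * h p ∂(baseMeasure d T Ω))) := by
      rw [tendsto_iff_dist_tendsto_zero]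
      apply squeeze_zero (fun m => dist_nonneg)
        (g := fun m => Bh * ∫ p, |velAvg (f m) ψ p - g p| ∂(baseMeasure d T Ω))
      · intro m
        rw [Real.dist_eq]
        have hgh : Integrable (fun p => g p * h p) (baseMeasure d T Ω) := by
          have := hg.bdd_mul hhm.aestronglyMeasurable
            (c := Bh) (Filter.Eventually.of_forall fun p => by rw [Real.norm_eq_abs]; exact hhb p)
          exact this.congr (Filter.Eventually.of_forall fun p => by ring)
        have hvh : Integrable (fun p => velAvg (f m) ψ p * h p) (baseMeasure d T Ω) := by
          have := (hvAint m).bdd_mul hhm.aestronglyMeasurable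
            (c := Bh) (Filter.Eventually.of_forall fun p => by rw [Real.norm_eq_abs]; exact hhb p)
          exact this.congr (Filter.Eventually.of_forall fun p => by ring)
        rw [← integral_sub hvh hgh]
        calc |∫ p, (velAvg (f m) ψ p * h p - g p * h p) ∂(baseMeasure d T Ω)|
            ≤ ∫ p, |velAvg (f m) ψ p * h p - g p * h p| ∂(baseMeasure d T Ω) := by
              rw [← Real.norm_eq_abs]
              exact (norm_integral_le_integral_norm _)
          _ ≤ ∫ p, Bh * |velAvg (f m) ψ p - g p| ∂(baseMeasure d T Ω) := by
              apply integral_mono_ae (hvh.sub hgh).abs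
                (((hvAint m).sub hg).abs.const_mul Bh)
              apply Filter.Eventually.of_forall
              intro p
              simp only [Pi.sub_apply]
              have : velAvg (f m) ψ p * h p - g p * h p = (velAvg (f m) ψ p - g p) * h p := by
                ring
              rw [this, abs_mul, mul_comm]
              exact mul_le_mul_of_nonneg_right (hhb p) (abs_nonneg _)
          _ = Bh * ∫ p, |velAvg (f m) ψ p - g p| ∂(baseMeasure d T Ω) := integral_const_mul _ _
      · have := htend.const_mul Bh
        simpa using this
    exact tendsto_nhds_unique h1 h2
  -- choose the sign weight
  obtain ⟨g₀, hg₀sm, hgeq⟩ := hg.1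
  set D₀ : ℝ × EuclideanSpace ℝ (Fin d) → ℝ := fun p => velAvg flim ψ p - g₀ p with hD₀
  have hD₀m : Measurable D₀ :=
    (measurable_velAvg flim ψ hflim_meas hψm).measurable.sub hg₀sm.measurable
  set h : ℝ × EuclideanSpace ℝ (Fin d) → ℝ := fun p => if 0 ≤ D₀ p then 1 else -1 with hh
  have hhm : Measurable h :=
    Measurable.ite (measurableSet_le measurable_const hD₀m) measurable_const measurable_const
  have hhb : ∀ p, |h p| ≤ 1 := by
    intro p; rw [hh]; dsimp only; split <;> simp
  have heq := claim h hhm 1 hhb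
  have hzero : ∫ p, (velAvg flim ψ p - g p) * h p ∂(baseMeasure d T Ω) = 0 := by
    have hgh : Integrable (fun p => g p * h p) (baseMeasure d T Ω) := by
      have := hg.bdd_mul hhm.aestronglyMeasurable
        (c := 1) (Filter.Eventually.of_forall fun p => by rw [Real.norm_eq_abs]; exact hhb p)
      exact this.congr (Filter.Eventually.of_forall fun p => by ring)
    have hvh : Integrable (fun p => velAvg flim ψ p * h p) (baseMeasure d T Ω) := by
      have := hvAlim_int.bdd_mul hhm.aestronglyMeasurable
        (c := 1) (Filter.Eventually.of_forall fun p => by rw [Real.norm_eq_abs]; exact hhb p)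
      exact this.congr (Filter.Eventually.of_forall fun p => by ring)
    have : ∫ p, (velAvg flim ψ p - g p) * h p ∂(baseMeasure d T Ω) =
        (∫ p, velAvg flim ψ p * h p ∂(baseMeasure d T Ω)) -
        ∫ p, g p * h p ∂(baseMeasure d T Ω) := by
      rw [← integral_sub hvh hgh]
      exact integral_congr_ae (Filter.Eventually.of_forall fun p => by ring)
    rw [this, heq, sub_self]
  have habs : (fun p => (velAvg flim ψ p - g p) * h p) =ᵐ[baseMeasure d T Ω]
      (fun p => |velAvg flim ψ p - g p|) := by
    filter_upwards [hgeq] with p hp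
    rw [hh]
    dsimp only
    rw [hD₀]
    dsimp only
    simp only [← hp]
    split_ifs with hsign
    · rw [mul_one, abs_of_nonneg hsign]
    · rw [mul_neg_one, abs_of_neg (lt_of_not_ge hsign)]
  have hzero' : ∫ p, |velAvg flim ψ p - g p| ∂(baseMeasure d T Ω) = 0 := by
    rw [← integral_congr_ae habs, hzero]
  have hintabs : Integrable (fun p => |velAvg flim ψ p - g p|) (baseMeasure d T Ω) :=
    (hvAlim_int.sub hg).abs
  have := (integral_eq_zero_iff_of_nonneg_ae
    (Filter.Eventually.of_forall fun p => abs_nonneg _) hintabs).mp hzero'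
  filter_upwards [this] with p hp
  have : |velAvg flim ψ p - g p| = 0 := hp
  have := abs_eq_zero.mp this
  linarith [sub_eq_zero.mp this]

lemma ofReal_abs_sub_chain (a b c e x : ℝ) :
    ENNReal.ofReal |a - x| ≤ ENNReal.ofReal |a - b| + ENNReal.ofReal |b - c| +
      ENNReal.ofReal |c - e| + ENNReal.ofReal |e - x| := by
  calc ENNReal.ofReal |a - x|
      ≤ ENNReal.ofReal (|a - b| + |b - c| + |c - e| + |e - x|) := by
        apply ENNReal.ofReal_le_ofReal
        calc |a - x| ≤ |a - e| + |e - x| := abs_sub_le a e x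
          _ ≤ (|a - c| + |c - e|) + |e - x| := by linarith [abs_sub_le a c e]
          _ ≤ ((|a - b| + |b - c|) + |c - e|) + |e - x| := by linarith [abs_sub_le a b c]
          _ = |a - b| + |b - c| + |c - e| + |e - x| := by ring
    _ ≤ ENNReal.ofReal |a - b| + ENNReal.ofReal |b - c| +
        ENNReal.ofReal |c - e| + ENNReal.ofReal |e - x| := by
        calc ENNReal.ofReal (|a - b| + |b - c| + |c - e| + |e - x|)
            ≤ ENNReal.ofReal (|a - b| + |b - c| + |c - e|) + ENNReal.ofReal |e - x| :=
              ENNReal.ofReal_add_le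
          _ ≤ ENNReal.ofReal (|a - b| + |b - c|) + ENNReal.ofReal |c - e| +
              ENNReal.ofReal |e - x| := add_le_add_left ENNReal.ofReal_add_le _
          _ ≤ ENNReal.ofReal |a - b| + ENNReal.ofReal |b - c| + ENNReal.ofReal |c - e| +
              ENNReal.ofReal |e - x| := by
              exact add_le_add_left (add_le_add_left ENNReal.ofReal_add_le _) _

/-- **Velocity averaging against subcubic test functions under third-moment bounds.**
If `f_m ⇀ f` weakly in `L¹((0,T)×Ω×ℝ^d)`, velocity averages against continuous compactly
supported test functions converge in `L¹((0,T)×Ω)`, and the third velocity moments of `f_m`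
are uniformly bounded, then for every continuous `φ` of subcubic growth the averages
`∫ f_m φ dv` converge to `∫ f φ dv` in `L¹((0,T)×Ω)`. -/
theorem subcubic_velocity_averaging
    (d : ℕ) (hd : 1 ≤ d) (T : ℝ) (hT : 0 < T)
    (Ω : Set (EuclideanSpace ℝ (Fin d))) (hΩ : IsOpen Ω)
    (f : ℕ → ℝ × EuclideanSpace ℝ (Fin d) × EuclideanSpace ℝ (Fin d) → ℝ)
    (flim : ℝ × EuclideanSpace ℝ (Fin d) × EuclideanSpace ℝ (Fin d) → ℝ)
    (hf_meas : ∀ m, Measurable (f m))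
    (hf_nonneg : ∀ m q, 0 ≤ f m q)
    (hf_int : ∀ m, Integrable (f m) (kineticMeasure d T Ω))
    (hflim_meas : Measurable flim)
    (hflim_int : Integrable flim (kineticMeasure d T Ω))
    -- weak convergence in L¹ of `f_m` to `flim`
    (hweak : ∀ φ : ℝ × EuclideanSpace ℝ (Fin d) × EuclideanSpace ℝ (Fin d) → ℝ,
      Measurable φ → (∃ C : ℝ, ∀ q, |φ q| ≤ C) →
      Tendsto (fun m => ∫ q, f m q * φ q ∂(kineticMeasure d T Ω)) atTop
        (𝓝 (∫ q, flim q * φ q ∂(kineticMeasure d T Ω))))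
    -- convergence in `L¹((0,T)×Ω)` of the compactly supported velocity averages
    (havg : ∀ ψ : EuclideanSpace ℝ (Fin d) → ℝ, Continuous ψ → HasCompactSupport ψ →
      ∃ g : ℝ × EuclideanSpace ℝ (Fin d) → ℝ, Integrable g (baseMeasure d T Ω) ∧
        Tendsto (fun m => ∫ p, |velAvg (f m) ψ p - g p| ∂(baseMeasure d T Ω)) atTop (𝓝 0))
    -- uniform bound on the third velocity moments
    (hmoment : ∃ C : ℝ, ∀ m,
      (∫⁻ q, ENNReal.ofReal (‖q.2.2‖ ^ 3 * f m q) ∂(kineticMeasure d T Ω)) ≤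
        ENNReal.ofReal C) :
    ∀ φ : EuclideanSpace ℝ (Fin d) → ℝ, Continuous φ →
      Tendsto (fun v => |φ v| / (1 + ‖v‖) ^ 3) (cocompact (EuclideanSpace ℝ (Fin d)))
        (𝓝 0) →
      Tendsto (fun m => ∫⁻ p, ENNReal.ofReal |velAvg (f m) φ p - velAvg flim φ p|
          ∂(baseMeasure d T Ω)) atTop (𝓝 0) := by
  intro φ hφc hφdecay
  classical
  obtain ⟨C, hC⟩ := hmoment
  set C₀ : ℝ := max C 0 with hC₀def
  have hC₀0 : 0 ≤ C₀ := le_max_right _ _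
  have hC₀ : ∀ m, (∫⁻ q, ENNReal.ofReal (‖q.2.2‖ ^ 3 * f m q) ∂(kineticMeasure d T Ω)) ≤
      ENNReal.ofReal C₀ :=
    fun m => le_trans (hC m) (ENNReal.ofReal_le_ofReal (le_max_left _ _))
  have hpospt : ∀ v : EuclideanSpace ℝ (Fin d), (0:ℝ) < (1 + ‖v‖) ^ 3 := by
    intro v; positivity
  -- growth bound for φ
  have hKb : ∃ Kb : ℝ, 0 ≤ Kb ∧ ∀ v, |φ v| ≤ Kb * (1 + ‖v‖) ^ 3 := by
    have h1 := hφdecay (Iio_mem_nhds (by norm_num : (0:ℝ) < 1))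
    rw [Filter.mem_map, mem_cocompact] at h1
    obtain ⟨K₁, hK₁c, hK₁s⟩ := h1
    obtain ⟨C₁, hC₁⟩ := hK₁c.exists_bound_of_continuousOn hφc.continuousOn
    refine ⟨max C₁ 1, le_trans (by norm_num) (le_max_right _ _), fun v => ?_⟩
    by_cases hv : v ∈ K₁
    · calc |φ v| ≤ C₁ := by rw [← Real.norm_eq_abs]; exact hC₁ v hv
        _ ≤ max C₁ 1 := le_max_left _ _
        _ ≤ max C₁ 1 * (1 + ‖v‖) ^ 3 := by
            have h3 : (1:ℝ) ≤ (1 + ‖v‖) ^ 3 := by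
              apply one_le_pow₀
              linarith [norm_nonneg v]
            have h4 : (0:ℝ) ≤ max C₁ 1 := le_trans (by norm_num) (le_max_right C₁ 1)
            calc max C₁ 1 = max C₁ 1 * 1 := (mul_one _).symm
              _ ≤ max C₁ 1 * (1 + ‖v‖) ^ 3 := mul_le_mul_of_nonneg_left h3 h4
    · have : |φ v| / (1 + ‖v‖) ^ 3 < 1 := hK₁s hv
      have := (div_lt_one (hpospt v)).mp this
      calc |φ v| ≤ 1 * (1 + ‖v‖) ^ 3 := by linarith
        _ ≤ max C₁ 1 * (1 + ‖v‖) ^ 3 :=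
          mul_le_mul_of_nonneg_right (le_max_right _ _) (le_of_lt (hpospt v))
  obtain ⟨Kb, hKb0, hKbφ⟩ := hKb
  -- uniform mass bounds
  have hmassw := hweak (fun _ => 1) measurable_const ⟨1, fun q => by norm_num⟩
  simp only [mul_one] at hmassw
  obtain ⟨M, hM⟩ := hmassw.bddAbove_range
  have hM' : ∀ m, ∫ q, f m q ∂(kineticMeasure d T Ω) ≤ M := fun m =>
    hM (Set.mem_range_self m)
  set M₀ : ℝ := max M (∫ q, flim q ∂(kineticMeasure d T Ω)) with hM₀def
  have hM₀ : ∀ m, ∫ q, f m q ∂(kineticMeasure d T Ω) ≤ M₀ := fun m =>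
    le_trans (hM' m) (le_max_left _ _)
  have hmass : ∀ m, ∫⁻ q, ENNReal.ofReal (f m q) ∂(kineticMeasure d T Ω) ≤
      ENNReal.ofReal M₀ := by
    intro m
    rw [← ofReal_integral_eq_lintegral_ofReal (hf_int m)
      (Filter.Eventually.of_forall (hf_nonneg m))]
    exact ENNReal.ofReal_le_ofReal (hM₀ m)
  -- flim is a.e. nonneg
  have hflim_nonneg : 0 ≤ᵐ[kineticMeasure d T Ω] flim := by
    set s : Set (ℝ × EuclideanSpace ℝ (Fin d) × EuclideanSpace ℝ (Fin d)) :=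
      {q | flim q < 0} with hsdef
    have hs : MeasurableSet s := measurableSet_lt hflim_meas measurable_const
    set ind : ℝ × EuclideanSpace ℝ (Fin d) × EuclideanSpace ℝ (Fin d) → ℝ :=
      s.indicator (fun _ => 1) with hinddef
    have hindm : Measurable ind := measurable_const.indicator hs
    have hindb : ∀ q, |ind q| ≤ 1 := by
      intro q; rw [hinddef]; simp only [Set.indicator_apply]
      split <;> norm_num
    have hw := hweak ind hindm ⟨1, hindb⟩
    have hnn : ∀ m, 0 ≤ ∫ q, f m q * ind q ∂(kineticMeasure d T Ω) := by
      intro m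
      apply integral_nonneg
      intro q
      apply mul_nonneg (hf_nonneg m q)
      rw [hinddef]; simp only [Set.indicator_apply]; split <;> norm_num
    have hlim_nn : 0 ≤ ∫ q, flim q * ind q ∂(kineticMeasure d T Ω) :=
      ge_of_tendsto' hw hnn
    have hprod : ∀ q, flim q * ind q = s.indicator flim q := by
      intro q; rw [hinddef]
      simp only [Set.indicator_apply]
      split <;> simp
    have hint_ind : Integrable (fun q => flim q * ind q) (kineticMeasure d T Ω) := by
      have := hflim_int.bdd_mul hindm.aestronglyMeasurable
        (c := 1) (Filter.Eventually.of_forall fun q => by rw [Real.norm_eq_abs]; exact hindb q)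
      exact this.congr (Filter.Eventually.of_forall fun q => by ring)
    have hneg : ∀ q, flim q * ind q ≤ 0 := by
      intro q
      rw [hprod]
      by_cases hq : q ∈ s
      · rw [Set.indicator_of_mem hq]
        exact le_of_lt hq
      · rw [Set.indicator_of_notMem hq]
    -- so the integral of the nonpositive function is zero, whence it's zero a.e.
    have hzero0 : ∫ q, flim q * ind q ∂(kineticMeasure d T Ω) = 0 :=
      le_antisymm (integral_nonpos hneg) hlim_nn
    have hzero : ∫ q, - (flim q * ind q) ∂(kineticMeasure d T Ω) = 0 := by
      rw [integral_neg, hzero0, neg_zero]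
    have hintneg : Integrable (fun q => - (flim q * ind q)) (kineticMeasure d T Ω) :=
      hint_ind.neg
    have := (integral_eq_zero_iff_of_nonneg_ae
      (Filter.Eventually.of_forall fun q => by
        show (0:ℝ) ≤ -(flim q * ind q)
        simp only [neg_nonneg]; exact hneg q)
      hintneg).mp hzero
    filter_upwards [this] with q hq
    have hq' : - (flim q * ind q) = 0 := hq
    by_contra hcon
    push_neg at hcon
    have hqs : q ∈ s := hcon
    have : ind q = 1 := by rw [hinddef]; simp [Set.indicator_of_mem hqs]
    rw [this, mul_one] at hq'
    have : flim q = 0 := by linarith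
    rw [hsdef] at hqs
    simp only [Set.mem_setOf_eq] at hqs
    linarith
  -- flim mass and moment bounds
  have hflim_mass : ∫⁻ q, ENNReal.ofReal (flim q) ∂(kineticMeasure d T Ω) ≤
      ENNReal.ofReal M₀ := by
    rw [← ofReal_integral_eq_lintegral_ofReal hflim_int hflim_nonneg]
    exact ENNReal.ofReal_le_ofReal (le_max_right _ _)
  have hflim_mom : ∫⁻ q, ENNReal.ofReal (‖q.2.2‖ ^ 3 * flim q) ∂(kineticMeasure d T Ω) ≤
      ENNReal.ofReal C₀ := by
    -- truncation argument
    have htrunc : ∀ N : ℕ, ∫⁻ q, ENNReal.ofReal (flim q * min (‖q.2.2‖ ^ 3) (N:ℝ))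
        ∂(kineticMeasure d T Ω) ≤ ENNReal.ofReal C₀ := by
      intro N
      have hφNm : Measurable (fun q : ℝ × EuclideanSpace ℝ (Fin d) × EuclideanSpace ℝ (Fin d)
          => min (‖q.2.2‖ ^ 3) (N:ℝ)) :=
        ((measurable_snd.comp measurable_snd).norm.pow measurable_const).min measurable_const
      have hφNb : ∀ q : ℝ × EuclideanSpace ℝ (Fin d) × EuclideanSpace ℝ (Fin d),
          |min (‖q.2.2‖ ^ 3) (N:ℝ)| ≤ (N:ℝ) := by
        intro q
        rw [abs_of_nonneg (le_min (by positivity) (Nat.cast_nonneg N))]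
        exact min_le_right _ _
      have hw := hweak _ hφNm ⟨N, hφNb⟩
      have hbd : ∀ m, ∫ q, f m q * min (‖q.2.2‖ ^ 3) (N:ℝ) ∂(kineticMeasure d T Ω) ≤ C₀ := by
        intro m
        have hint : Integrable (fun q => f m q * min (‖q.2.2‖ ^ 3) (N:ℝ))
            (kineticMeasure d T Ω) := by
          have := (hf_int m).bdd_mul hφNm.aestronglyMeasurable
            (c := N) (Filter.Eventually.of_forall fun q => by rw [Real.norm_eq_abs]; exact hφNb q)
          exact this.congr (Filter.Eventually.of_forall fun q => by ring)
        have hnn : 0 ≤ᵐ[kineticMeasure d T Ω] fun q => f m q * min (‖q.2.2‖ ^ 3) (N:ℝ) :=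
          Filter.Eventually.of_forall fun q =>
            mul_nonneg (hf_nonneg m q) (le_min (by positivity) (Nat.cast_nonneg N))
        have he := ofReal_integral_eq_lintegral_ofReal hint hnn
        have hle : ∫⁻ q, ENNReal.ofReal (f m q * min (‖q.2.2‖ ^ 3) (N:ℝ))
            ∂(kineticMeasure d T Ω) ≤ ENNReal.ofReal C₀ := by
          refine le_trans (lintegral_mono fun q => ?_) (hC₀ m)
          apply ENNReal.ofReal_le_ofReal
          calc f m q * min (‖q.2.2‖ ^ 3) (N:ℝ) ≤ f m q * ‖q.2.2‖ ^ 3 :=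
                mul_le_mul_of_nonneg_left (min_le_left _ _) (hf_nonneg m q)
            _ = ‖q.2.2‖ ^ 3 * f m q := by ring
        rw [← he] at hle
        exact (ENNReal.ofReal_le_ofReal_iff hC₀0).mp hle
      have hlim : ∫ q, flim q * min (‖q.2.2‖ ^ 3) (N:ℝ) ∂(kineticMeasure d T Ω) ≤ C₀ :=
        le_of_tendsto' hw hbd
      have hintl : Integrable (fun q => flim q * min (‖q.2.2‖ ^ 3) (N:ℝ))
          (kineticMeasure d T Ω) := by
        have := hflim_int.bdd_mul hφNm.aestronglyMeasurable
          (c := N) (Filter.Eventually.of_forall fun q => by rw [Real.norm_eq_abs]; exact hφNb q)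
        exact this.congr (Filter.Eventually.of_forall fun q => by ring)
      have hnnl : 0 ≤ᵐ[kineticMeasure d T Ω] fun q => flim q * min (‖q.2.2‖ ^ 3) (N:ℝ) := by
        filter_upwards [hflim_nonneg] with q hq
        exact mul_nonneg hq (le_min (by positivity) (Nat.cast_nonneg N))
      rw [← ofReal_integral_eq_lintegral_ofReal hintl hnnl]
      exact ENNReal.ofReal_le_ofReal hlim
    -- monotone convergence
    have hmono : ∀ᵐ q ∂(kineticMeasure d T Ω), Monotone (fun N : ℕ =>
        ENNReal.ofReal (flim q * min (‖q.2.2‖ ^ 3) (N:ℝ))) := by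
      filter_upwards [hflim_nonneg] with q hq
      intro i j hij
      apply ENNReal.ofReal_le_ofReal
      apply mul_le_mul_of_nonneg_left _ hq
      exact min_le_min le_rfl (Nat.cast_le.mpr hij)
    have hm : ∀ N : ℕ, AEMeasurable (fun q : ℝ × EuclideanSpace ℝ (Fin d) ×
        EuclideanSpace ℝ (Fin d) => ENNReal.ofReal (flim q * min (‖q.2.2‖ ^ 3) (N:ℝ)))
        (kineticMeasure d T Ω) := by
      intro N
      apply Measurable.aemeasurable
      apply ENNReal.measurable_ofReal.comp
      exact hflim_meas.mul
        (((measurable_snd.comp measurable_snd).norm.pow measurable_const).min measurable_const)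
    have hsup : ∫⁻ q, ENNReal.ofReal (‖q.2.2‖ ^ 3 * flim q) ∂(kineticMeasure d T Ω) =
        ⨆ N : ℕ, ∫⁻ q, ENNReal.ofReal (flim q * min (‖q.2.2‖ ^ 3) (N:ℝ))
          ∂(kineticMeasure d T Ω) := by
      rw [← lintegral_iSup' hm hmono]
      apply lintegral_congr_ae
      filter_upwards [hflim_nonneg] with q hq
      apply le_antisymm
      · apply le_iSup_of_le ⌈‖q.2.2‖ ^ 3⌉₊
        apply ENNReal.ofReal_le_ofReal
        rw [min_eq_left (Nat.le_ceil _)]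
        linarith [le_of_eq (mul_comm (‖q.2.2‖ ^ 3) (flim q))]
      · apply iSup_le
        intro N
        apply ENNReal.ofReal_le_ofReal
        calc flim q * min (‖q.2.2‖ ^ 3) (N:ℝ) ≤ flim q * ‖q.2.2‖ ^ 3 :=
            mul_le_mul_of_nonneg_left (min_le_left _ _) hq
          _ = ‖q.2.2‖ ^ 3 * flim q := mul_comm _ _
    rw [hsup]
    exact iSup_le htrunc
  -- start the ε-argument
  rw [ENNReal.tendsto_atTop_zero]
  intro ε hε
  set Btot : ℝ≥0∞ := 4 * ENNReal.ofReal M₀ + 4 * ENNReal.ofReal C₀ with hBtot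
  have hBtop : Btot ≠ ⊤ := by
    rw [hBtot]
    exact (ENNReal.add_ne_top).mpr ⟨ENNReal.mul_ne_top (by norm_num) ENNReal.ofReal_ne_top,
      ENNReal.mul_ne_top (by norm_num) ENNReal.ofReal_ne_top⟩
  have hε4 : (0:ℝ≥0∞) < ε / 4 := ENNReal.div_pos hε.ne' (by norm_num)
  -- choose δ
  have hδex : ∃ δ : ℝ, 0 < δ ∧ ENNReal.ofReal δ * Btot ≤ ε / 4 := by
    have ht : Tendsto (fun n : ℕ => ENNReal.ofReal (1 / (n + 1 : ℝ)) * Btot) atTop (𝓝 0) := by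
      have h1 : Tendsto (fun n : ℕ => ENNReal.ofReal (1 / (n + 1 : ℝ))) atTop (𝓝 0) := by
        rw [show (0:ℝ≥0∞) = ENNReal.ofReal 0 by simp]
        exact ENNReal.tendsto_ofReal tendsto_one_div_add_atTop_nhds_zero_nat
      have := ENNReal.Tendsto.mul_const h1 (Or.inr hBtop)
      rwa [zero_mul] at this
    obtain ⟨N, hN⟩ := (ENNReal.tendsto_atTop_zero).mp ht (ε / 4) hε4
    exact ⟨1 / (N + 1 : ℝ), by positivity, hN N le_rfl⟩
  obtain ⟨δ, hδpos, hδB⟩ := hδex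
  -- cutoff
  have hsetδ := hφdecay (Iio_mem_nhds hδpos)
  rw [Filter.mem_map, mem_cocompact] at hsetδ
  obtain ⟨K₂, hK₂c, hK₂s⟩ := hsetδ
  obtain ⟨R, hR⟩ := hK₂c.isBounded.subset_closedBall 0
  set R' : ℝ := max R 0 with hR'def
  have hKR' : K₂ ⊆ Metric.closedBall 0 R' :=
    le_trans hR (Metric.closedBall_subset_closedBall (le_max_left _ _))
  set χ : EuclideanSpace ℝ (Fin d) → ℝ := fun v => max 0 (min 1 (R' + 1 - ‖v‖)) with hχdef
  have hχc : Continuous χ :=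
    continuous_const.max (continuous_const.min (continuous_const.sub continuous_norm))
  have hχ0 : ∀ v, 0 ≤ χ v := fun v => le_max_left _ _
  have hχ1 : ∀ v, χ v ≤ 1 := fun v => by
    rw [hχdef]; simp only
    exact max_le (by norm_num) (min_le_left _ _)
  have hχone : ∀ v : EuclideanSpace ℝ (Fin d), ‖v‖ ≤ R' → χ v = 1 := by
    intro v hv
    rw [hχdef]; simp only
    rw [min_eq_left (by linarith), max_eq_right (by norm_num)]
  have hχsupp : HasCompactSupport χ := by
    apply HasCompactSupport.intro (isCompact_closedBall (0 : EuclideanSpace ℝ (Fin d)) (R' + 1))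
    intro v hv
    rw [Metric.mem_closedBall, not_le, dist_zero_right] at hv
    rw [hχdef]; simp only
    rw [max_eq_left]
    exact le_trans (min_le_right _ _) (by linarith)
  set ψ : EuclideanSpace ℝ (Fin d) → ℝ := fun v => φ v * χ v with hψdef
  have hψc : Continuous ψ := hφc.mul hχc
  have hψsupp : HasCompactSupport ψ := hχsupp.mul_left
  have hψK : ∀ v, |ψ v| ≤ Kb * (1 + ‖v‖) ^ 3 := by
    intro v
    rw [hψdef]; simp only
    rw [abs_mul, abs_of_nonneg (hχ0 v)]
    calc |φ v| * χ v ≤ |φ v| * 1 := mul_le_mul_of_nonneg_left (hχ1 v) (abs_nonneg _)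
      _ = |φ v| := mul_one _
      _ ≤ Kb * (1 + ‖v‖) ^ 3 := hKbφ v
  have htail : ∀ v, |φ v - ψ v| ≤ δ * (1 + ‖v‖) ^ 3 := by
    intro v
    rw [hψdef]; simp only
    by_cases hv : ‖v‖ ≤ R'
    · rw [hχone v hv, mul_one, sub_self, abs_zero]
      positivity
    · have hvK : v ∉ K₂ := by
        intro hvK
        exact hv (by simpa [dist_zero_right] using hKR' hvK)
      have hφsmall : |φ v| / (1 + ‖v‖) ^ 3 < δ := hK₂s hvK
      have hφsmall' : |φ v| < δ * (1 + ‖v‖) ^ 3 := by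
        rw [div_lt_iff₀ (hpospt v)] at hφsmall
        linarith
      calc |φ v - φ v * χ v| = |φ v| * |1 - χ v| := by
            rw [← abs_mul]; ring_nf
        _ ≤ |φ v| * 1 := by
            apply mul_le_mul_of_nonneg_left _ (abs_nonneg _)
            rw [abs_of_nonneg (by linarith [hχ1 v])]
            linarith [hχ0 v]
        _ = |φ v| := mul_one _
        _ ≤ δ * (1 + ‖v‖) ^ 3 := le_of_lt hφsmall'
  -- compactly supported averaging
  obtain ⟨g, hg_int, hg_tend⟩ := havg ψ hψc hψsupp
  have hid : velAvg flim ψ =ᵐ[baseMeasure d T Ω] g :=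
    identify f flim hf_meas hf_int hflim_meas hflim_int hweak ψ hψc hψsupp g hg_int hg_tend
  -- T2a convergence
  have hψm : Measurable ψ := hψc.measurable
  have hψbdd := hψsupp.exists_bound_of_continuous hψc
  obtain ⟨Bψ, hψb⟩ := hψbdd
  simp only [Real.norm_eq_abs] at hψb
  have hvAint : ∀ m, Integrable (velAvg (f m) ψ) (baseMeasure d T Ω) := by
    intro m
    have h1 : Integrable (fun q => ψ q.2.2 * f m q) (kineticMeasure d T Ω) :=
      (hf_int m).bdd_mul (hψm.comp (measurable_snd.comp measurable_snd)).aestronglyMeasurable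
        (c := Bψ) (Filter.Eventually.of_forall fun q => by rw [Real.norm_eq_abs]; exact hψb _)
    exact integrable_velAvg' (fun q => f m q * ψ q.2.2)
      (h1.congr (Filter.Eventually.of_forall fun q => by ring))
  have h2a : Tendsto (fun m => ∫⁻ p, ENNReal.ofReal |velAvg (f m) ψ p - g p|
      ∂(baseMeasure d T Ω)) atTop (𝓝 0) := by
    have heq : ∀ m, ∫⁻ p, ENNReal.ofReal |velAvg (f m) ψ p - g p| ∂(baseMeasure d T Ω) =
        ENNReal.ofReal (∫ p, |velAvg (f m) ψ p - g p| ∂(baseMeasure d T Ω)) := by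
      intro m
      have hint' : Integrable (fun p => |velAvg (f m) ψ p - g p|) (baseMeasure d T Ω) :=
        ((hvAint m).sub hg_int).abs
      rw [ofReal_integral_eq_lintegral_ofReal hint'
        (Filter.Eventually.of_forall fun p => abs_nonneg _)]
    simp only [heq]
    rw [show (0:ℝ≥0∞) = ENNReal.ofReal 0 by simp]
    exact ENNReal.tendsto_ofReal hg_tend
  obtain ⟨N₂, hN₂⟩ := (ENNReal.tendsto_atTop_zero).mp h2a (ε / 4) hε4
  refine ⟨N₂, fun m hm => ?_⟩
  -- the four pieces
  have hφm : Measurable φ := hφc.measurable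
  have hA_meas : Measurable (fun p => ENNReal.ofReal
      |velAvg (f m) φ p - velAvg (f m) ψ p|) := by
    apply ENNReal.measurable_ofReal.comp
    exact ((measurable_velAvg (f m) φ (hf_meas m) hφm).measurable.sub
      (measurable_velAvg (f m) ψ (hf_meas m) hψm).measurable).abs
  have hB_meas : AEMeasurable (fun p => ENNReal.ofReal |velAvg (f m) ψ p - g p|)
      (baseMeasure d T Ω) := by
    apply AEMeasurable.ennreal_ofReal
    exact continuous_abs.measurable.comp_aemeasurable
      ((measurable_velAvg (f m) ψ (hf_meas m) hψm).measurable.aemeasurable.sub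
        hg_int.1.aemeasurable)
  have hCp_meas : AEMeasurable (fun p => ENNReal.ofReal |g p - velAvg flim ψ p|)
      (baseMeasure d T Ω) := by
    apply AEMeasurable.ennreal_ofReal
    exact continuous_abs.measurable.comp_aemeasurable
      (hg_int.1.aemeasurable.sub
        (measurable_velAvg flim ψ hflim_meas hψm).measurable.aemeasurable)
  have hT1 : ∫⁻ p, ENNReal.ofReal |velAvg (f m) φ p - velAvg (f m) ψ p|
      ∂(baseMeasure d T Ω) ≤ ε / 4 := by
    calc ∫⁻ p, ENNReal.ofReal |velAvg (f m) φ p - velAvg (f m) ψ p| ∂(baseMeasure d T Ω)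
        ≤ ENNReal.ofReal δ *
          (4 * ∫⁻ q, ENNReal.ofReal (f m q) ∂(kineticMeasure d T Ω) +
           4 * ∫⁻ q, ENNReal.ofReal (‖q.2.2‖ ^ 3 * f m q) ∂(kineticMeasure d T Ω)) :=
          tail_bound (f m) (hf_meas m) (hf_int m)
            (Filter.Eventually.of_forall (hf_nonneg m))
            (lt_of_le_of_lt (hC₀ m) ENNReal.ofReal_lt_top).ne
            φ ψ hφm hψm Kb hKbφ hψK δ hδpos.le htail
      _ ≤ ENNReal.ofReal δ * Btot := by
          apply mul_le_mul_right
          rw [hBtot]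
          exact add_le_add (mul_le_mul_right (hmass m) _) (mul_le_mul_right (hC₀ m) _)
      _ ≤ ε / 4 := hδB
  have hT4 : ∫⁻ p, ENNReal.ofReal |velAvg flim ψ p - velAvg flim φ p|
      ∂(baseMeasure d T Ω) ≤ ε / 4 := by
    calc ∫⁻ p, ENNReal.ofReal |velAvg flim ψ p - velAvg flim φ p| ∂(baseMeasure d T Ω)
        ≤ ENNReal.ofReal δ *
          (4 * ∫⁻ q, ENNReal.ofReal (flim q) ∂(kineticMeasure d T Ω) +
           4 * ∫⁻ q, ENNReal.ofReal (‖q.2.2‖ ^ 3 * flim q) ∂(kineticMeasure d T Ω)) :=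
          tail_bound flim hflim_meas hflim_int hflim_nonneg
            (lt_of_le_of_lt hflim_mom ENNReal.ofReal_lt_top).ne
            ψ φ hψm hφm Kb hψK hKbφ δ hδpos.le
            (fun v => by rw [abs_sub_comm]; exact htail v)
      _ ≤ ENNReal.ofReal δ * Btot := by
          apply mul_le_mul_right
          rw [hBtot]
          exact add_le_add (mul_le_mul_right hflim_mass _) (mul_le_mul_right hflim_mom _)
      _ ≤ ε / 4 := hδB
  have hT3 : ∫⁻ p, ENNReal.ofReal |g p - velAvg flim ψ p| ∂(baseMeasure d T Ω) = 0 := by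
    have : (fun p => ENNReal.ofReal |g p - velAvg flim ψ p|) =ᵐ[baseMeasure d T Ω]
        (fun _ => 0) := by
      filter_upwards [hid] with p hp
      rw [hp, sub_self, abs_zero, ENNReal.ofReal_zero]
    rw [lintegral_congr_ae this, lintegral_zero]
  -- combine
  calc ∫⁻ p, ENNReal.ofReal |velAvg (f m) φ p - velAvg flim φ p| ∂(baseMeasure d T Ω)
      ≤ ∫⁻ p, (ENNReal.ofReal |velAvg (f m) φ p - velAvg (f m) ψ p| +
          ENNReal.ofReal |velAvg (f m) ψ p - g p| +
          ENNReal.ofReal |g p - velAvg flim ψ p| +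
          ENNReal.ofReal |velAvg flim ψ p - velAvg flim φ p|) ∂(baseMeasure d T Ω) := by
        apply lintegral_mono
        intro p
        exact ofReal_abs_sub_chain _ _ _ _ _
    _ = (∫⁻ p, ENNReal.ofReal |velAvg (f m) φ p - velAvg (f m) ψ p| ∂(baseMeasure d T Ω)) +
        (∫⁻ p, ENNReal.ofReal |velAvg (f m) ψ p - g p| ∂(baseMeasure d T Ω)) +
        (∫⁻ p, ENNReal.ofReal |g p - velAvg flim ψ p| ∂(baseMeasure d T Ω)) +
        (∫⁻ p, ENNReal.ofReal |velAvg flim ψ p - velAvg flim φ p| ∂(baseMeasure d T Ω)) := by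
        rw [lintegral_add_left' (hA_meas.aemeasurable.fun_add hB_meas |>.fun_add hCp_meas),
          lintegral_add_left' (hA_meas.aemeasurable.fun_add hB_meas),
          lintegral_add_left' hA_meas.aemeasurable]
    _ ≤ ε / 4 + ε / 4 + 0 + ε / 4 := by
        exact add_le_add (add_le_add (add_le_add hT1 (hN₂ m hm)) hT3.le) hT4
    _ ≤ ε := by
        rw [add_zero]
        calc ε / 4 + ε / 4 + ε / 4 ≤ ε / 4 + ε / 4 + (ε / 4 + ε / 4) := by
              exact add_le_add_right (le_add_self) _
          _ = 4 * (ε / 4) := by ring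
          _ ≤ ε := ENNReal.mul_div_le
end

section
/- Approximation of physical initial data by continuous compactly supported functions preserving mass, energy, and entropy (Lemma A.1 of the paper). Let d ≥ 1 and let Ω ⊆ ℝ^d be a bounded open set. Let f⁰ : Ω×ℝ^d → [0,∞) be measurable with ∫_{Ω×ℝ^d} (1 + |v|² + |log f⁰(x,v)|) f⁰(x,v) dx dv < ∞ (with the convention 0·log 0 = 0). Then there exists a sequence (f_n⁰) of nonnegative continuous functions on ℝ^d×ℝ^d, each with compact support contained in the closure of Ω times ℝ^d, such that: f_n⁰ → f⁰ in L¹(Ω×ℝ^d); ∫_{Ω×ℝ^d} f_n⁰ log f_n⁰ dx dv → ∫_{Ω×ℝ^d} f⁰ log f⁰ dx dv; and ∫_{Ω×ℝ^d} |v|² f_n⁰ dx dv → ∫_{Ω×ℝ^d} |v|² f⁰ dx dv. -/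
open MeasureTheory Filter Topology
open scoped ENNReal

lemma abs_mul_log_le_sqrt {t : ℝ} (h0 : 0 ≤ t) (h1 : t ≤ 1) :
    |t * Real.log t| ≤ 2 * Real.sqrt t := by
  rcases eq_or_lt_of_le h0 with h | h
  · simp [← h]
  · have hlog : Real.log t ≤ 0 := Real.log_nonpos h0 h1
    have hst : 0 < Real.sqrt t := Real.sqrt_pos.2 h
    have h2 : -Real.log t ≤ 2 / Real.sqrt t := by
      have : Real.log (Real.sqrt t) = Real.log t / 2 := Real.log_sqrt h0
      have hinv : Real.log (Real.sqrt t)⁻¹ ≤ (Real.sqrt t)⁻¹ - 1 :=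
        Real.log_le_sub_one_of_pos (by positivity)
      rw [Real.log_inv, this] at hinv
      have : -Real.log t ≤ 2 * ((Real.sqrt t)⁻¹ - 1) := by linarith
      have h3 : 2 * ((Real.sqrt t)⁻¹ - 1) ≤ 2 / Real.sqrt t := by
        rw [div_eq_mul_inv]; nlinarith [hst.le]
      linarith
    have habs : |t * Real.log t| = t * (-Real.log t) := by
      rw [abs_of_nonpos (mul_nonpos_of_nonneg_of_nonpos h0 hlog)]; ring
    rw [habs]
    calc t * (-Real.log t) ≤ t * (2 / Real.sqrt t) :=
          mul_le_mul_of_nonneg_left h2 h0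
      _ = 2 * (t / Real.sqrt t) := by ring
      _ = 2 * Real.sqrt t := by rw [Real.div_sqrt]

lemma mul_log_holder {k a b : ℝ} (hk : 1 ≤ k) (ha : a ∈ Set.Icc 0 k) (hb : b ∈ Set.Icc 0 k) :
    |a * Real.log a - b * Real.log b|
      ≤ (Real.sqrt k * (1 + Real.log k) + 2) * Real.sqrt |a - b| := by
  have hlogk : 0 ≤ Real.log k := Real.log_nonneg hk
  have hsk : 1 ≤ Real.sqrt k := by
    rw [show (1:ℝ) = Real.sqrt 1 by simp]; exact Real.sqrt_le_sqrt hk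
  -- WLOG a ≤ b
  suffices H : ∀ a b : ℝ, a ∈ Set.Icc 0 k → b ∈ Set.Icc 0 k → a ≤ b →
      |a * Real.log a - b * Real.log b|
        ≤ (Real.sqrt k * (1 + Real.log k) + 2) * Real.sqrt |a - b| by
    rcases le_total a b with h | h
    · exact H a b ha hb h
    · rw [abs_sub_comm, abs_sub_comm a b]; exact H b a hb ha h
  intro a b ha hb hab
  obtain ⟨ha0, hak⟩ := ha
  obtain ⟨hb0, hbk⟩ := hb
  set s := b - a with hs
  have hs0 : 0 ≤ s := by linarith
  have habs : |a - b| = s := by rw [abs_sub_comm, abs_of_nonneg hs0]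
  rw [habs]
  have hssqrt : 0 ≤ Real.sqrt s := Real.sqrt_nonneg s
  have hsk' : Real.sqrt s ≤ Real.sqrt k := Real.sqrt_le_sqrt (by linarith)
  have hs_le : s ≤ Real.sqrt k * Real.sqrt s := by
    calc s = Real.sqrt s * Real.sqrt s := (Real.mul_self_sqrt hs0).symm
      _ ≤ Real.sqrt k * Real.sqrt s := mul_le_mul_of_nonneg_right hsk' hssqrt
  rcases eq_or_lt_of_le hb0 with hb' | hb'
  · -- b = 0 hence a = 0
    have hA : a = 0 := le_antisymm (by linarith) ha0
    simp only [hA, ← hb']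
    simp
    positivity
  -- identity
  have hid : a * Real.log a - b * Real.log b
      = a * (Real.log a - Real.log b) + (a - b) * Real.log b := by ring
  have h1 : |a * (Real.log a - Real.log b)| ≤ s := by
    rcases eq_or_lt_of_le ha0 with ha' | ha'
    · simp [← ha']; linarith
    · have hlab : Real.log a ≤ Real.log b := Real.log_le_log ha' hab
      have : |a * (Real.log a - Real.log b)| = a * (Real.log b - Real.log a) := by
        rw [abs_of_nonpos (by nlinarith)]; ring
      rw [this, ← Real.log_div (by linarith) (by linarith)]
      have hba : Real.log (b / a) ≤ b / a - 1 := Real.log_le_sub_one_of_pos (by positivity)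
      calc a * Real.log (b / a) ≤ a * (b / a - 1) :=
            mul_le_mul_of_nonneg_left hba ha0
        _ = b - a := by field_simp
  have h2 : |(a - b) * Real.log b| ≤ Real.sqrt k * Real.log k * Real.sqrt s + 2 * Real.sqrt s := by
    have habs2 : |(a - b) * Real.log b| = s * |Real.log b| := by
      rw [abs_mul, habs]
    rw [habs2]
    rcases le_or_gt 1 b with hb1 | hb1
    · have : |Real.log b| = Real.log b := abs_of_nonneg (Real.log_nonneg hb1)
      rw [this]
      have hlb : Real.log b ≤ Real.log k := Real.log_le_log (by linarith) hbk
      have : s * Real.log b ≤ Real.sqrt k * Real.sqrt s * Real.log k := by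
        calc s * Real.log b ≤ s * Real.log k := mul_le_mul_of_nonneg_left hlb hs0
          _ ≤ Real.sqrt k * Real.sqrt s * Real.log k :=
              mul_le_mul_of_nonneg_right hs_le hlogk
      nlinarith [Real.sqrt_nonneg s]
    · rcases eq_or_lt_of_le hs0 with hs' | hs'
      · simp [← hs']
      · have hsb : s ≤ b := by linarith
        have hlbs : |Real.log b| ≤ |Real.log s| := by
          rw [abs_of_nonpos (Real.log_nonpos hb0 hb1.le),
            abs_of_nonpos (Real.log_nonpos hs0 (by linarith))]
          have := Real.log_le_log hs' hsb
          linarith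
        have : s * |Real.log b| ≤ s * |Real.log s| := mul_le_mul_of_nonneg_left hlbs hs0
        have h3 : s * |Real.log s| ≤ 2 * Real.sqrt s := by
          have := abs_mul_log_le_sqrt hs0 (by linarith : s ≤ 1)
          rwa [abs_mul, abs_of_nonneg hs0] at this
        nlinarith [Real.sqrt_nonneg k, mul_nonneg (mul_nonneg (Real.sqrt_nonneg k) hlogk) hssqrt]
  calc |a * Real.log a - b * Real.log b|
      ≤ |a * (Real.log a - Real.log b)| + |(a - b) * Real.log b| := by
        rw [hid]; exact abs_add_le _ _
    _ ≤ s + (Real.sqrt k * Real.log k * Real.sqrt s + 2 * Real.sqrt s) := by linarith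
    _ ≤ (Real.sqrt k * (1 + Real.log k) + 2) * Real.sqrt s := by nlinarith

lemma sqrt_le_add_div {s ε : ℝ} (hs : 0 ≤ s) (hε : 0 < ε) :
    Real.sqrt s ≤ Real.sqrt ε + s / Real.sqrt ε := by
  have hse : 0 < Real.sqrt ε := Real.sqrt_pos.2 hε
  rcases le_total s ε with h | h
  · have : Real.sqrt s ≤ Real.sqrt ε := Real.sqrt_le_sqrt h
    have : 0 ≤ s / Real.sqrt ε := by positivity
    linarith [Real.sqrt_le_sqrt h]
  · have h1 : Real.sqrt ε ≤ Real.sqrt s := Real.sqrt_le_sqrt h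
    have h2 : Real.sqrt s = s / Real.sqrt s := (Real.div_sqrt).symm
    have h3 : s / Real.sqrt s ≤ s / Real.sqrt ε :=
      div_le_div_of_nonneg_left hs hse h1 |>.trans_eq rfl
    linarith [hse.le]

lemma clip_abs_sub_le {k a b : ℝ} (hb0 : 0 ≤ b) (hbk : b ≤ k) :
    |max 0 (min a k) - b| ≤ |a - b| := by
  have hb : max 0 (min b k) = b := by rw [min_eq_left hbk, max_eq_right hb0]
  have h1 : |max (min a k) 0 - max (min b k) 0| ≤ |min a k - min b k| :=
    abs_max_sub_max_le_abs _ _ _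
  rw [max_comm (min a k) 0, max_comm (min b k) 0, hb] at h1
  refine h1.trans ?_
  refine (abs_min_sub_min_le_max a k b k).trans_eq ?_
  simp

set_option maxHeartbeats 4000000


/-- **Lemma A.1: approximation of physical initial data.**
If `Ω ⊆ ℝ^d` is bounded and open and `f⁰ ≥ 0` satisfies
`∫_{Ω×ℝ^d} (1 + |v|² + |log f⁰|) f⁰ < ∞`, then there is a sequence of nonnegative
continuous compactly supported functions, supported in `closure Ω × ℝ^d`, converging to
`f⁰` in `L¹(Ω×ℝ^d)` together with their entropies and kinetic energies. -/
theorem approximation_of_physical_initial_data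
    (d : ℕ) (hd : 1 ≤ d)
    (Ω : Set (EuclideanSpace ℝ (Fin d))) (hΩ_open : IsOpen Ω)
    (hΩ_bdd : Bornology.IsBounded Ω)
    (f0 : EuclideanSpace ℝ (Fin d) × EuclideanSpace ℝ (Fin d) → ℝ)
    (hf0_meas : Measurable f0)
    (hf0_nonneg : ∀ q, 0 ≤ f0 q)
    (hf0_phys : (∫⁻ q in Ω ×ˢ (Set.univ : Set (EuclideanSpace ℝ (Fin d))),
        ENNReal.ofReal ((1 + ‖q.2‖ ^ 2 + |Real.log (f0 q)|) * f0 q)) < ⊤) :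
    ∃ fn : ℕ → EuclideanSpace ℝ (Fin d) × EuclideanSpace ℝ (Fin d) → ℝ,
      (∀ n, Continuous (fn n)) ∧
      (∀ n q, 0 ≤ fn n q) ∧
      (∀ n, HasCompactSupport (fn n)) ∧
      (∀ n, Function.support (fn n) ⊆
        (closure Ω) ×ˢ (Set.univ : Set (EuclideanSpace ℝ (Fin d)))) ∧
      Tendsto (fun n =>
          ∫ q in Ω ×ˢ (Set.univ : Set (EuclideanSpace ℝ (Fin d))), |fn n q - f0 q|)
        atTop (𝓝 0) ∧
      Tendsto (fun n =>
          ∫ q in Ω ×ˢ (Set.univ : Set (EuclideanSpace ℝ (Fin d))),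
            fn n q * Real.log (fn n q))
        atTop (𝓝 (∫ q in Ω ×ˢ (Set.univ : Set (EuclideanSpace ℝ (Fin d))),
          f0 q * Real.log (f0 q))) ∧
      Tendsto (fun n =>
          ∫ q in Ω ×ˢ (Set.univ : Set (EuclideanSpace ℝ (Fin d))), ‖q.2‖ ^ 2 * fn n q)
        atTop (𝓝 (∫ q in Ω ×ˢ (Set.univ : Set (EuclideanSpace ℝ (Fin d))),
          ‖q.2‖ ^ 2 * f0 q)) := by
  
  set S : Set (EuclideanSpace ℝ (Fin d) × EuclideanSpace ℝ (Fin d)) :=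
    Ω ×ˢ (Set.univ : Set (EuclideanSpace ℝ (Fin d))) with hS_def
  have hS_meas : MeasurableSet S := hΩ_open.measurableSet.prod MeasurableSet.univ
  -- generic integrability criterion
  have key_int : ∀ F : EuclideanSpace ℝ (Fin d) × EuclideanSpace ℝ (Fin d) → ℝ,
      Measurable F → (∀ q, |F q| ≤ (1 + ‖q.2‖ ^ 2 + |Real.log (f0 q)|) * f0 q) →
      IntegrableOn F S := by
    intro F hFm hFle
    refine ⟨hFm.aestronglyMeasurable, ?_⟩
    rw [hasFiniteIntegral_iff_norm]
    refine lt_of_le_of_lt (lintegral_mono fun q => ?_) hf0_phys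
    exact ENNReal.ofReal_le_ofReal ((Real.norm_eq_abs _).le.trans (hFle q))
  have bracket_ge : ∀ q : EuclideanSpace ℝ (Fin d) × EuclideanSpace ℝ (Fin d),
      (1:ℝ) ≤ 1 + ‖q.2‖ ^ 2 + |Real.log (f0 q)| := fun q => by
    have := sq_nonneg ‖q.2‖; have := abs_nonneg (Real.log (f0 q)); linarith
  have hf0_int : IntegrableOn f0 S := by
    refine key_int f0 hf0_meas fun q => ?_
    rw [abs_of_nonneg (hf0_nonneg q)]
    nlinarith [bracket_ge q, hf0_nonneg q]
  have hent_int : IntegrableOn (fun q => f0 q * Real.log (f0 q)) S := by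
    refine key_int _ (hf0_meas.mul (Real.measurable_log.comp hf0_meas)) fun q => ?_
    rw [abs_mul]
    rw [abs_of_nonneg (hf0_nonneg q)]
    nlinarith [abs_nonneg (Real.log (f0 q)), hf0_nonneg q, sq_nonneg ‖q.2‖]
  have hen_int : IntegrableOn (fun q => ‖q.2‖ ^ 2 * f0 q) S := by
    refine key_int _ ((measurable_snd.norm.pow measurable_const).mul hf0_meas) fun q => ?_
    rw [abs_of_nonneg (mul_nonneg (sq_nonneg _) (hf0_nonneg q))]
    nlinarith [abs_nonneg (Real.log (f0 q)), hf0_nonneg q, sq_nonneg ‖q.2‖]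
  -- truncation
  set A : ℕ → Set (EuclideanSpace ℝ (Fin d) × EuclideanSpace ℝ (Fin d)) :=
    fun k => {q | q.1 ∈ Ω ∧ ‖q.2‖ ≤ k ∧ f0 q ≤ k} with hA_def
  have hA_meas : ∀ k, MeasurableSet (A k) := by
    intro k
    refine MeasurableSet.inter (measurable_fst hΩ_open.measurableSet) ?_
    exact MeasurableSet.inter (measurable_snd.norm measurableSet_Iic)
      (hf0_meas measurableSet_Iic)
  have hA_sub : ∀ k, A k ⊆ S := fun k q hq => ⟨hq.1, Set.mem_univ _⟩
  set h : ℕ → EuclideanSpace ℝ (Fin d) × EuclideanSpace ℝ (Fin d) → ℝ :=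
    fun k => (A k).indicator f0 with hh_def
  have h_nonneg : ∀ k q, 0 ≤ h k q := fun k q =>
    Set.indicator_nonneg (fun q _ => hf0_nonneg q) q
  have h_le : ∀ k q, h k q ≤ k := by
    intro k q
    by_cases hq : q ∈ A k
    · rw [hh_def]; simp only [Set.indicator_of_mem hq]; exact hq.2.2
    · rw [hh_def]; simp only [Set.indicator_of_notMem hq]; positivity
  have h_meas : ∀ k, Measurable (h k) := fun k => hf0_meas.indicator (hA_meas k)
  have h_int : ∀ k, Integrable (h k) := by
    intro k
    rw [hh_def, integrable_indicator_iff (hA_meas k)]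
    exact hf0_int.mono_set (hA_sub k)
  have h_ne : ∀ k q, h k q ≠ 0 → q ∈ A k := by
    intro k q hq
    by_contra hmem
    exact hq (Set.indicator_of_notMem hmem f0)
  have hA_mem : ∀ (k : ℕ) q, q.1 ∈ Ω → ‖q.2‖ ≤ (k:ℝ) → f0 q ≤ (k:ℝ) → q ∈ A k := by
    intro k q h1 h2 h3
    simp only [hA_def, Set.mem_setOf_eq]
    exact ⟨h1, h2, h3⟩
  have h_event : ∀ q ∈ S, ∀ᶠ k : ℕ in atTop, h k q = f0 q := by
    intro q hq
    filter_upwards [eventually_ge_atTop ⌈‖q.2‖⌉₊, eventually_ge_atTop ⌈f0 q⌉₊] with k h1 h2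
    refine Set.indicator_of_mem (hA_mem k q hq.1 ?_ ?_) f0
    · exact (Nat.le_ceil _).trans (Nat.cast_le.2 h1)
    · exact (Nat.le_ceil _).trans (Nat.cast_le.2 h2)
  -- the three h-side integrability facts on S
  have hφh_int : ∀ k, IntegrableOn (fun q => h k q * Real.log (h k q)) S := by
    intro k
    refine Integrable.mono' hent_int.abs
      ((h_meas k).mul (Real.measurable_log.comp (h_meas k))).aestronglyMeasurable
      (Filter.Eventually.of_forall fun q => ?_)
    by_cases hq : q ∈ A k
    · rw [Real.norm_eq_abs, hh_def]; simp only [Set.indicator_of_mem hq]; exact le_rfl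
    · rw [Real.norm_eq_abs, hh_def]; simp only [Set.indicator_of_notMem hq]
      simp [Real.log_zero]
      positivity
  have henh_int : ∀ k, IntegrableOn (fun q => ‖q.2‖ ^ 2 * h k q) S := by
    intro k
    refine Integrable.mono' hen_int.abs
      ((measurable_snd.norm.pow measurable_const).mul (h_meas k)).aestronglyMeasurable
      (Filter.Eventually.of_forall fun q => ?_)
    rw [Real.norm_eq_abs, abs_mul, abs_of_nonneg (sq_nonneg ‖q.2‖),
      abs_of_nonneg (h_nonneg k q)]
    by_cases hq : q ∈ A k
    · rw [hh_def]; simp only [Set.indicator_of_mem hq]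
      exact le_abs_self _
    · rw [hh_def]; simp only [Set.indicator_of_notMem hq]
      rw [mul_zero]; exact abs_nonneg _
  have hhS_int : ∀ k, IntegrableOn (h k) S := fun k => (h_int k).integrableOn
  -- dominated convergence
  have T1 : Tendsto (fun k => ∫ q in S, |h k q - f0 q|) atTop (𝓝 0) := by
    have := tendsto_integral_of_dominated_convergence (μ := volume.restrict S)
      (F := fun k q => |h k q - f0 q|) (f := fun _ => (0:ℝ)) (bound := fun q => f0 q)
      (fun k => ((h_meas k).sub hf0_meas).abs.aestronglyMeasurable)
      hf0_int
      (fun k => Filter.Eventually.of_forall fun q => ?_)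
      ?_
    · simpa using this
    · rw [Real.norm_eq_abs, abs_abs]
      by_cases hq : q ∈ A k
      · rw [hh_def]; simp only [Set.indicator_of_mem hq]
        rw [sub_self, abs_zero]; exact hf0_nonneg q
      · rw [hh_def]; simp only [Set.indicator_of_notMem hq]
        rw [zero_sub, abs_neg, abs_of_nonneg (hf0_nonneg q)]
    · filter_upwards [ae_restrict_mem hS_meas] with q hq
      refine Tendsto.congr' ?_ tendsto_const_nhds
      filter_upwards [h_event q hq] with k hk
      rw [hk, sub_self, abs_zero]
  have T2 : Tendsto (fun k => ∫ q in S, h k q * Real.log (h k q)) atTop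
      (𝓝 (∫ q in S, f0 q * Real.log (f0 q))) := by
    refine tendsto_integral_of_dominated_convergence
      (bound := fun q => |f0 q * Real.log (f0 q)|)
      (fun k => ((h_meas k).mul (Real.measurable_log.comp (h_meas k))).aestronglyMeasurable)
      hent_int.abs
      (fun k => Filter.Eventually.of_forall fun q => ?_)
      ?_
    · by_cases hq : q ∈ A k
      · rw [Real.norm_eq_abs, hh_def]; simp only [Set.indicator_of_mem hq]; exact le_rfl
      · rw [Real.norm_eq_abs, hh_def]; simp only [Set.indicator_of_notMem hq]
        simp [Real.log_zero]
        positivity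
    · filter_upwards [ae_restrict_mem hS_meas] with q hq
      refine Tendsto.congr' ?_ tendsto_const_nhds
      filter_upwards [h_event q hq] with k hk
      rw [hk]
  have T3 : Tendsto (fun k => ∫ q in S, ‖q.2‖ ^ 2 * h k q) atTop
      (𝓝 (∫ q in S, ‖q.2‖ ^ 2 * f0 q)) := by
    refine tendsto_integral_of_dominated_convergence
      (bound := fun q => ‖q.2‖ ^ 2 * f0 q)
      (fun k => ((measurable_snd.norm.pow measurable_const).mul (h_meas k)).aestronglyMeasurable)
      hen_int
      (fun k => Filter.Eventually.of_forall fun q => ?_)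
      ?_
    · rw [Real.norm_eq_abs, abs_mul, abs_of_nonneg (sq_nonneg ‖q.2‖),
        abs_of_nonneg (h_nonneg k q)]
      by_cases hq : q ∈ A k
      · rw [hh_def]; simp only [Set.indicator_of_mem hq]; exact le_rfl
      · rw [hh_def]; simp only [Set.indicator_of_notMem hq]
        rw [mul_zero]; exact mul_nonneg (sq_nonneg _) (hf0_nonneg q)
    · filter_upwards [ae_restrict_mem hS_meas] with q hq
      refine Tendsto.congr' ?_ tendsto_const_nhds
      filter_upwards [h_event q hq] with k hk
      rw [hk]

  haveI hreg : (volume : Measure (EuclideanSpace ℝ (Fin d) × EuclideanSpace ℝ (Fin d))).Regular :=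
    Measure.Regular.of_sigmaCompactSpace_of_isLocallyFiniteMeasure _
  -- finiteness facts
  have hμΩ : volume Ω ≠ ⊤ := hΩ_bdd.measure_lt_top.ne
  have key : ∀ k : ℕ, 1 ≤ k → ∀ ε : ℝ, 0 < ε →
      ∃ g : EuclideanSpace ℝ (Fin d) × EuclideanSpace ℝ (Fin d) → ℝ,
        Continuous g ∧ (∀ q, 0 ≤ g q) ∧ (∀ q, g q ≤ k) ∧ HasCompactSupport g ∧
        (Function.support g ⊆ Ω ×ˢ (Set.univ : Set (EuclideanSpace ℝ (Fin d)))) ∧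
        (∀ q : EuclideanSpace ℝ (Fin d) × EuclideanSpace ℝ (Fin d),
          (k:ℝ) + 2 < ‖q.2‖ → g q = 0) ∧
        (∫ q, |g q - h k q|) ≤ ε := by
    intro k hk ε hε
    have hk0 : (0:ℝ) ≤ k := Nat.cast_nonneg k
    obtain ⟨g₀, g₀cs, hg₀, g₀cont, g₀int⟩ :=
      (h_int k).exists_hasCompactSupport_integral_sub_le (by positivity : (0:ℝ) < ε/3)
    -- clip to [0, k]
    set g₁ : EuclideanSpace ℝ (Fin d) × EuclideanSpace ℝ (Fin d) → ℝ :=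
      fun q => max 0 (min (g₀ q) k) with hg₁_def
    have g₁cont : Continuous g₁ := continuous_const.max (g₀cont.min continuous_const)
    have g₁cs : HasCompactSupport g₁ := by
      have : g₁ = (fun t => max 0 (min t (k:ℝ))) ∘ g₀ := rfl
      rw [this]
      exact g₀cs.comp_left (by simp [min_eq_left hk0])
    have g₁_nonneg : ∀ q, 0 ≤ g₁ q := fun q => le_max_left _ _
    have g₁_le : ∀ q, g₁ q ≤ k := fun q => max_le hk0 (min_le_right _ _)
    have g₁int : Integrable g₁ := g₁cont.integrable_of_hasCompactSupport g₁cs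
    have g₁_close : (∫ q, |g₁ q - h k q|) ≤ ε/3 := by
      refine le_trans (integral_mono (g₁int.sub (h_int k)).abs ((h_int k).sub g₀int).norm
        fun q => ?_) hg₀
      show |g₁ q - h k q| ≤ ‖h k q - g₀ q‖
      rw [Real.norm_eq_abs, abs_sub_comm (h k q)]
      exact clip_abs_sub_le (h_nonneg k q) (h_le k q)
    -- cutoff in v
    obtain ⟨ψ, hψ1, hψ0, ψcs, hψmem⟩ :=
      exists_continuous_one_zero_of_isCompact
        (isCompact_closedBall (0 : EuclideanSpace ℝ (Fin d)) (k:ℝ))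
        (Metric.isOpen_ball (x := (0 : EuclideanSpace ℝ (Fin d))) (ε := (k:ℝ)+2)).isClosed_compl
        (by
          rw [Set.disjoint_compl_right_iff_subset]
          exact Metric.closedBall_subset_ball (by linarith))
    -- inner compact in Ω
    set V : ℝ≥0∞ := volume (Metric.closedBall (0 : EuclideanSpace ℝ (Fin d)) ((k:ℝ)+2)) with hV_def
    have hV_fin : V ≠ ⊤ := (Metric.isBounded_closedBall.measure_lt_top).ne
    have hVt : (0:ℝ) ≤ V.toReal := ENNReal.toReal_nonneg
    set δr : ℝ := ε / (3 * ((k:ℝ)+1) * (V.toReal + 1)) with hδr_def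
    have hδr_pos : 0 < δr := by positivity
    obtain ⟨K, hKΩ, hKcomp, hKlt⟩ := hΩ_open.measurableSet.exists_isCompact_lt_add hμΩ
      (by simp [ENNReal.ofReal_eq_zero, not_le, hδr_pos] : ENNReal.ofReal δr ≠ 0)
    have hKdiff : volume (Ω \ K) < ENNReal.ofReal δr :=
      measure_diff_lt_of_lt_add hKcomp.measurableSet.nullMeasurableSet hKΩ
        ((measure_mono hKΩ).trans_lt hμΩ.lt_top).ne hKlt
    obtain ⟨χ, hχ1, hχ0, χcs, hχmem⟩ :=
      exists_continuous_one_zero_of_isCompact hKcomp hΩ_open.isClosed_compl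
        (by rw [Set.disjoint_compl_right_iff_subset]; exact hKΩ)
    -- the approximant
    set g : EuclideanSpace ℝ (Fin d) × EuclideanSpace ℝ (Fin d) → ℝ :=
      fun q => χ q.1 * ψ q.2 * g₁ q with hg_def
    have hχ01 : ∀ x, 0 ≤ χ x ∧ χ x ≤ 1 := fun x => ⟨(hχmem x).1, (hχmem x).2⟩
    have hψ01 : ∀ v, 0 ≤ ψ v ∧ ψ v ≤ 1 := fun v => ⟨(hψmem v).1, (hψmem v).2⟩
    have gcont : Continuous g :=
      ((χ.continuous.comp continuous_fst).mul (ψ.continuous.comp continuous_snd)).mul g₁cont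
    have gcs : HasCompactSupport g := g₁cs.mul_left
    have g_nonneg : ∀ q, 0 ≤ g q := fun q =>
      mul_nonneg (mul_nonneg (hχ01 _).1 (hψ01 _).1) (g₁_nonneg q)
    have g_le : ∀ q, g q ≤ k := by
      intro q
      calc χ q.1 * ψ q.2 * g₁ q ≤ 1 * g₁ q := by
            refine mul_le_mul_of_nonneg_right ?_ (g₁_nonneg q)
            exact mul_le_one₀ (hχ01 _).2 (hψ01 _).1 (hψ01 _).2
        _ = g₁ q := one_mul _
        _ ≤ k := g₁_le q
    have g_supp : Function.support g ⊆ Ω ×ˢ (Set.univ : Set (EuclideanSpace ℝ (Fin d))) := by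
      intro q hq
      refine ⟨?_, Set.mem_univ _⟩
      by_contra hx
      exact hq (by rw [hg_def]; simp [hχ0 hx])
    have g_suppv : ∀ q : EuclideanSpace ℝ (Fin d) × EuclideanSpace ℝ (Fin d),
        (k:ℝ) + 2 < ‖q.2‖ → g q = 0 := by
      intro q hq
      have : q.2 ∈ (Metric.ball (0 : EuclideanSpace ℝ (Fin d)) ((k:ℝ)+2))ᶜ := by
        simp only [Set.mem_compl_iff, Metric.mem_ball, dist_zero_right, not_lt]
        linarith
      rw [hg_def]; simp [hψ0 this]
    -- the error estimate
    set W : Set (EuclideanSpace ℝ (Fin d) × EuclideanSpace ℝ (Fin d)) :=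
      (Ω \ K) ×ˢ Metric.closedBall (0 : EuclideanSpace ℝ (Fin d)) ((k:ℝ)+2) with hW_def
    have hW_meas : MeasurableSet W :=
      (hΩ_open.measurableSet.diff hKcomp.measurableSet).prod measurableSet_closedBall
    have hμW : volume W = volume (Ω \ K) * V := by
      rw [hW_def, MeasureTheory.Measure.volume_eq_prod, Measure.prod_prod, hV_def]
    have hμW_fin : volume W < ⊤ := by
      rw [hμW]
      exact ENNReal.mul_lt_top (((measure_mono Set.diff_subset).trans_lt hμΩ.lt_top))
        hV_fin.lt_top
    have hWint : Integrable (W.indicator fun _ => (k:ℝ)) := by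
      rw [integrable_indicator_iff hW_meas]
      exact integrableOn_const hμW_fin.ne
    have hpt : ∀ q, |g q - h k q| ≤ |g₁ q - h k q| + W.indicator (fun _ => (k:ℝ)) q := by
      intro q
      have hind_nonneg : 0 ≤ W.indicator (fun _ => (k:ℝ)) q :=
        Set.indicator_nonneg (fun _ _ => hk0) q
      set c := χ q.1 * ψ q.2 with hc_def
      have hc0 : 0 ≤ c := mul_nonneg (hχ01 _).1 (hψ01 _).1
      have hc1 : c ≤ 1 := mul_le_one₀ (hχ01 _).2 (hψ01 _).1 (hψ01 _).2
      have habs : |g q - h k q| ≤ c * |g₁ q - h k q| + (1 - c) * h k q := by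
        have : g q - h k q = c * (g₁ q - h k q) + (c - 1) * h k q := by
          rw [hg_def]; ring
        have e1 : |c * (g₁ q - h k q)| = c * |g₁ q - h k q| := by
          rw [abs_mul, abs_of_nonneg hc0]
        have e2 : |(c - 1) * h k q| = (1 - c) * h k q := by
          rw [abs_mul, abs_of_nonpos (show c - 1 ≤ 0 by linarith),
            abs_of_nonneg (h_nonneg k q)]; ring
        rw [this]
        refine (abs_add_le _ _).trans ?_
        rw [e1, e2]
      refine habs.trans (add_le_add ?_ ?_)
      · exact mul_le_of_le_one_left (abs_nonneg _) hc1
      · by_cases hq : h k q = 0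
        · rw [hq, mul_zero]; exact hind_nonneg
        · have hqA : q ∈ A k := h_ne k q hq
          have hqΩ : q.1 ∈ Ω := hqA.1
          have hqv : ‖q.2‖ ≤ (k:ℝ) := hqA.2.1
          have hψeq : ψ q.2 = 1 := by
            refine hψ1 ?_
            simp only [Metric.mem_closedBall, dist_zero_right]
            exact hqv
          by_cases hqK : q.1 ∈ K
          · have hχeq : χ q.1 = 1 := hχ1 hqK
            have : c = 1 := by rw [hc_def, hχeq, hψeq]; ring
            rw [this, sub_self, zero_mul]; exact hind_nonneg
          · have hmemW : q ∈ W := by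
              refine ⟨⟨hqΩ, hqK⟩, ?_⟩
              simp only [Metric.mem_closedBall, dist_zero_right]
              linarith
            rw [Set.indicator_of_mem hmemW]
            have hh_le : h k q ≤ (k:ℝ) := h_le k q
            have : (1 - c) * h k q ≤ 1 * h k q :=
              mul_le_mul_of_nonneg_right (by linarith) (h_nonneg k q)
            linarith
    have gint : Integrable g := gcont.integrable_of_hasCompactSupport gcs
    have herr : (∫ q, |g q - h k q|) ≤ ε := by
      have h1 : (∫ q, |g q - h k q|)
          ≤ ∫ q, (|g₁ q - h k q| + W.indicator (fun _ => (k:ℝ)) q) := by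
        exact integral_mono (gint.sub (h_int k)).abs
          ((g₁int.sub (h_int k)).abs.add hWint) hpt
      have h2 : (∫ q, (|g₁ q - h k q| + W.indicator (fun _ => (k:ℝ)) q))
          = (∫ q, |g₁ q - h k q|) + ∫ q, W.indicator (fun _ => (k:ℝ)) q :=
        integral_add (g₁int.sub (h_int k)).abs hWint
      have h3 : (∫ q, W.indicator (fun _ => (k:ℝ)) q) = (volume W).toReal * k := by
        rw [integral_indicator_const _ hW_meas]; simp [smul_eq_mul, measureReal_def]
      have h4 : (volume W).toReal * k ≤ ε/3 := by
        have hWr : (volume W).toReal ≤ δr * V.toReal := by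
          rw [hμW, ENNReal.toReal_mul]
          refine mul_le_mul_of_nonneg_right ?_ ENNReal.toReal_nonneg
          exact ENNReal.toReal_le_of_le_ofReal hδr_pos.le hKdiff.le
        have : δr * V.toReal * k ≤ ε/3 := by
          rw [hδr_def]
          rw [div_mul_eq_mul_div, div_mul_eq_mul_div, div_le_div_iff₀ (by positivity) (by norm_num)]
          nlinarith [hε.le, hVt, hk0]
        nlinarith [hk0, ENNReal.toReal_nonneg (a := volume W)]
      rw [h2, h3] at h1
      linarith [g₁_close]
    exact ⟨g, gcont, g_nonneg, g_le, gcs, g_supp, g_suppv, herr⟩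

  -- Step 3: choose good approximants for each n
  have main : ∀ n : ℕ, ∃ g : EuclideanSpace ℝ (Fin d) × EuclideanSpace ℝ (Fin d) → ℝ,
      Continuous g ∧ (∀ q, 0 ≤ g q) ∧ HasCompactSupport g ∧
      (Function.support g ⊆
        (closure Ω) ×ˢ (Set.univ : Set (EuclideanSpace ℝ (Fin d)))) ∧
      (∫ q in S, |g q - h (n+1) q|) ≤ 1/((n:ℝ)+1) ∧
      |(∫ q in S, g q * Real.log (g q)) -
        ∫ q in S, h (n+1) q * Real.log (h (n+1) q)| ≤ 1/((n:ℝ)+1) ∧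
      |(∫ q in S, ‖q.2‖ ^ 2 * g q) - ∫ q in S, ‖q.2‖ ^ 2 * h (n+1) q| ≤ 1/((n:ℝ)+1) := by
    intro n
    set k : ℕ := n + 1 with hk_def
    have hk1 : 1 ≤ k := Nat.le_add_left 1 n
    have hkr : (1:ℝ) ≤ (k:ℝ) := by exact_mod_cast hk1
    have hkr0 : (0:ℝ) ≤ (k:ℝ) := by linarith
    set C : ℝ := Real.sqrt k * (1 + Real.log k) + 2 with hC_def
    have hsqk : (0:ℝ) ≤ Real.sqrt k := Real.sqrt_nonneg _
    have hlogk : (0:ℝ) ≤ Real.log k := Real.log_nonneg hkr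
    have hC_pos : 0 < C := by nlinarith
    set T : Set (EuclideanSpace ℝ (Fin d) × EuclideanSpace ℝ (Fin d)) :=
      Ω ×ˢ Metric.closedBall (0 : EuclideanSpace ℝ (Fin d)) ((k:ℝ)+2) with hT_def
    have hT_meas : MeasurableSet T := hΩ_open.measurableSet.prod measurableSet_closedBall
    have hμT_fin : volume T < ⊤ := by
      rw [hT_def, MeasureTheory.Measure.volume_eq_prod, Measure.prod_prod]
      exact ENNReal.mul_lt_top hμΩ.lt_top Metric.isBounded_closedBall.measure_lt_top
    set MT : ℝ := (volume T).toReal with hMT_def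
    have hMT0 : 0 ≤ MT := ENNReal.toReal_nonneg
    set D : ℝ := C * (MT + 1) + ((k:ℝ)+2)^2 + 1 with hD_def
    have hD1 : 1 ≤ D := by nlinarith
    set ε : ℝ := (1/(((n:ℝ)+1) * D))^2 with hε_def
    have hn0 : (0:ℝ) ≤ (n:ℝ) := Nat.cast_nonneg n
    have hn1 : (1:ℝ) ≤ (n:ℝ) + 1 := by linarith
    have hnD : (0:ℝ) < ((n:ℝ)+1) * D := by positivity
    have hnD1 : (1:ℝ) ≤ ((n:ℝ)+1) * D := by nlinarith
    have hε_pos : 0 < ε := by positivity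
    have hsqrtε : Real.sqrt ε = 1/(((n:ℝ)+1)*D) := by
      rw [hε_def, Real.sqrt_sq (by positivity)]
    have hsq_pos : 0 < Real.sqrt ε := by rw [hsqrtε]; positivity
    have hsq_le1 : Real.sqrt ε ≤ 1 := by
      rw [hsqrtε, div_le_one hnD]; linarith
    have hε_le : ε ≤ Real.sqrt ε := by
      calc ε = Real.sqrt ε * Real.sqrt ε := (Real.mul_self_sqrt hε_pos.le).symm
        _ ≤ 1 * Real.sqrt ε := mul_le_mul_of_nonneg_right hsq_le1 hsq_pos.le
        _ = Real.sqrt ε := one_mul _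
    have hD0 : D ≠ 0 := by linarith
    have hDε : D * Real.sqrt ε ≤ 1/((n:ℝ)+1) := by
      rw [hsqrtε]
      have : D * (1/(((n:ℝ)+1)*D)) = 1/((n:ℝ)+1) := by field_simp
      rw [this]
    obtain ⟨g, gcont, g0, gk, gcs, gsupp, gsuppv, gerr⟩ := key k hk1 ε hε_pos
    have gint : Integrable g := gcont.integrable_of_hasCompactSupport gcs
    have gintS : IntegrableOn g S := gint.integrableOn
    have habs_int : Integrable (fun q => |g q - h k q|) := (gint.sub (h_int k)).abs
    have hIS : (∫ q in S, |g q - h k q|) ≤ ε :=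
      le_trans (setIntegral_le_integral habs_int
        (Filter.Eventually.of_forall fun q => abs_nonneg _)) gerr
    have hIS0 : 0 ≤ ∫ q in S, |g q - h k q| :=
      integral_nonneg fun q => abs_nonneg _
    -- L¹ bound
    have B1 : (∫ q in S, |g q - h k q|) ≤ 1/((n:ℝ)+1) := by
      calc (∫ q in S, |g q - h k q|) ≤ ε := hIS
        _ ≤ Real.sqrt ε := hε_le
        _ ≤ D * Real.sqrt ε := le_mul_of_one_le_left hsq_pos.le hD1
        _ ≤ 1/((n:ℝ)+1) := hDε
    -- vanishing for large v
    have hzero_v : ∀ q : EuclideanSpace ℝ (Fin d) × EuclideanSpace ℝ (Fin d),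
        ((k:ℝ)+2) < ‖q.2‖ → g q = 0 ∧ h k q = 0 := by
      intro q hv
      refine ⟨gsuppv q hv, ?_⟩
      by_contra hne
      have := (h_ne k q hne).2.1
      linarith
    -- energy bound
    have hptE : ∀ q : EuclideanSpace ℝ (Fin d) × EuclideanSpace ℝ (Fin d),
        |‖q.2‖ ^ 2 * g q - ‖q.2‖ ^ 2 * h k q| ≤ ((k:ℝ)+2)^2 * |g q - h k q| := by
      intro q
      rw [← mul_sub, abs_mul, abs_of_nonneg (sq_nonneg ‖q.2‖)]
      rcases le_or_gt ‖q.2‖ ((k:ℝ)+2) with hv | hv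
      · refine mul_le_mul_of_nonneg_right ?_ (abs_nonneg _)
        have h0 := norm_nonneg q.2
        nlinarith
      · obtain ⟨hg0, hh0⟩ := hzero_v q hv
        rw [hg0, hh0, sub_self, abs_zero, mul_zero, mul_zero]
    have hEg_int : IntegrableOn (fun q => ‖q.2‖ ^ 2 * g q) S := by
      refine (Continuous.integrable_of_hasCompactSupport ?_ ?_).integrableOn
      · exact (continuous_snd.norm.pow 2).mul gcont
      · exact gcs.mul_left
    have B2 : |(∫ q in S, ‖q.2‖ ^ 2 * g q) - ∫ q in S, ‖q.2‖ ^ 2 * h k q| ≤ 1/((n:ℝ)+1) := by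
      rw [← integral_sub hEg_int (henh_int k)]
      have e1 : |∫ q in S, (‖q.2‖ ^ 2 * g q - ‖q.2‖ ^ 2 * h k q)|
          ≤ ∫ q in S, |‖q.2‖ ^ 2 * g q - ‖q.2‖ ^ 2 * h k q| := by
        simpa [Real.norm_eq_abs] using
          norm_integral_le_integral_norm (μ := volume.restrict S)
            (fun q => ‖q.2‖ ^ 2 * g q - ‖q.2‖ ^ 2 * h k q)
      have e2 : (∫ q in S, |‖q.2‖ ^ 2 * g q - ‖q.2‖ ^ 2 * h k q|)
          ≤ ∫ q in S, ((k:ℝ)+2)^2 * |g q - h k q| := by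
        refine integral_mono (hEg_int.sub (henh_int k)).abs
          (habs_int.integrableOn.const_mul _) fun q => hptE q
      have e3 : (∫ q in S, ((k:ℝ)+2)^2 * |g q - h k q|)
          = ((k:ℝ)+2)^2 * ∫ q in S, |g q - h k q| := integral_const_mul _ _
      have e4 : ((k:ℝ)+2)^2 * (∫ q in S, |g q - h k q|) ≤ D * Real.sqrt ε := by
        have h5 : ((k:ℝ)+2)^2 * (∫ q in S, |g q - h k q|) ≤ ((k:ℝ)+2)^2 * Real.sqrt ε := by
          refine mul_le_mul_of_nonneg_left (hIS.trans hε_le) (by positivity)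
        have h6 : ((k:ℝ)+2)^2 * Real.sqrt ε ≤ D * Real.sqrt ε := by
          refine mul_le_mul_of_nonneg_right ?_ hsq_pos.le
          nlinarith
        linarith
      refine e1.trans (e2.trans ?_)
      rw [e3]
      exact e4.trans hDε
    -- entropy bound
    have hφg_int : IntegrableOn (fun q => g q * Real.log (g q)) S := by
      refine (Continuous.integrable_of_hasCompactSupport
        (Real.continuous_mul_log.comp gcont) ?_).integrableOn
      exact gcs.comp_left (by simp)
    have hTind_int : IntegrableOn (T.indicator fun _ => (1:ℝ)) S := by
      refine Integrable.integrableOn ?_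
      rw [integrable_indicator_iff hT_meas]
      exact integrableOn_const hμT_fin.ne
    have hptφ : ∀ q ∈ S, |g q * Real.log (g q) - h k q * Real.log (h k q)|
        ≤ C * Real.sqrt ε * T.indicator (fun _ => (1:ℝ)) q
          + (C / Real.sqrt ε) * |g q - h k q| := by
      intro q hq
      by_cases hqT : q ∈ T
      · rw [Set.indicator_of_mem hqT]
        have hh := mul_log_holder (k := (k:ℝ)) hkr ⟨g0 q, gk q⟩ ⟨h_nonneg k q, h_le k q⟩
        refine hh.trans ?_
        have hs := sqrt_le_add_div (abs_nonneg (g q - h k q)) hε_pos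
        calc C * Real.sqrt |g q - h k q|
            ≤ C * (Real.sqrt ε + |g q - h k q| / Real.sqrt ε) :=
              mul_le_mul_of_nonneg_left hs hC_pos.le
          _ = C * Real.sqrt ε * 1 + (C / Real.sqrt ε) * |g q - h k q| := by
              ring
      · rw [Set.indicator_of_notMem hqT]
        have hv : ((k:ℝ)+2) < ‖q.2‖ := by
          by_contra hle
          push_neg at hle
          refine hqT ⟨hq.1, ?_⟩
          simpa [Metric.mem_closedBall, dist_zero_right] using hle
        obtain ⟨hg0, hh0⟩ := hzero_v q hv
        rw [hg0, hh0]
        have h9 : |(0:ℝ) * Real.log 0 - 0 * Real.log 0| = 0 := by simp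
        rw [h9]
        positivity
    have B3 : |(∫ q in S, g q * Real.log (g q)) -
        ∫ q in S, h k q * Real.log (h k q)| ≤ 1/((n:ℝ)+1) := by
      rw [← integral_sub hφg_int (hφh_int k)]
      have e1 : |∫ q in S, (g q * Real.log (g q) - h k q * Real.log (h k q))|
          ≤ ∫ q in S, |g q * Real.log (g q) - h k q * Real.log (h k q)| := by
        simpa [Real.norm_eq_abs] using
          norm_integral_le_integral_norm (μ := volume.restrict S)
            (fun q => g q * Real.log (g q) - h k q * Real.log (h k q))
      have e2 : (∫ q in S, |g q * Real.log (g q) - h k q * Real.log (h k q)|)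
          ≤ ∫ q in S, (C * Real.sqrt ε * T.indicator (fun _ => (1:ℝ)) q
            + (C / Real.sqrt ε) * |g q - h k q|) := by
        refine setIntegral_mono_on (hφg_int.sub (hφh_int k)).abs
          ((hTind_int.const_mul _).add (habs_int.integrableOn.const_mul _)) hS_meas hptφ
      have e3 : (∫ q in S, (C * Real.sqrt ε * T.indicator (fun _ => (1:ℝ)) q
            + (C / Real.sqrt ε) * |g q - h k q|))
          = C * Real.sqrt ε * (∫ q in S, T.indicator (fun _ => (1:ℝ)) q)
            + (C / Real.sqrt ε) * ∫ q in S, |g q - h k q| := by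
        rw [integral_add (hTind_int.const_mul _) (habs_int.integrableOn.const_mul _),
          integral_const_mul, integral_const_mul]
      have e4 : (∫ q in S, T.indicator (fun _ => (1:ℝ)) q) ≤ MT := by
        rw [integral_indicator_const _ hT_meas]
        simp only [smul_eq_mul, mul_one, measureReal_def]
        refine ENNReal.toReal_mono hμT_fin.ne ?_
        rw [Measure.restrict_apply hT_meas]
        exact measure_mono Set.inter_subset_left
      have e4' : 0 ≤ ∫ q in S, T.indicator (fun _ => (1:ℝ)) q :=
        integral_nonneg fun q => Set.indicator_nonneg (fun _ _ => zero_le_one) q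
      have e5 : (C / Real.sqrt ε) * (∫ q in S, |g q - h k q|) ≤ C * Real.sqrt ε := by
        have h7 : (C / Real.sqrt ε) * (∫ q in S, |g q - h k q|) ≤ (C / Real.sqrt ε) * ε :=
          mul_le_mul_of_nonneg_left hIS (by positivity)
        have h8 : (C / Real.sqrt ε) * ε = C * Real.sqrt ε := by
          rw [div_mul_eq_mul_div, mul_div_assoc, Real.div_sqrt]
        linarith
      have e6 : C * Real.sqrt ε * (MT + 1) ≤ D * Real.sqrt ε := by
        have : C * (MT + 1) ≤ D := by nlinarith
        calc C * Real.sqrt ε * (MT + 1) = C * (MT+1) * Real.sqrt ε := by ring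
          _ ≤ D * Real.sqrt ε := mul_le_mul_of_nonneg_right this hsq_pos.le
      refine e1.trans (e2.trans ?_)
      rw [e3]
      have e7 : C * Real.sqrt ε * (∫ q in S, T.indicator (fun _ => (1:ℝ)) q)
          ≤ C * Real.sqrt ε * MT :=
        mul_le_mul_of_nonneg_left e4 (by positivity)
      have := e6.trans hDε
      nlinarith
    refine ⟨g, gcont, g0, gcs, ?_, B1, B3, B2⟩
    intro q hq
    exact ⟨subset_closure (gsupp hq).1, Set.mem_univ _⟩
  -- Step 4: assemble the sequence
  choose fn fn_cont fn_nonneg fn_cs fn_supp fn_B1 fn_B3 fn_B2 using main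
  refine ⟨fn, fn_cont, fn_nonneg, fn_cs, fn_supp, ?_, ?_, ?_⟩
  · -- L¹ convergence
    have hbound : ∀ n : ℕ, (∫ q in S, |fn n q - f0 q|)
        ≤ 1/((n:ℝ)+1) + ∫ q in S, |h (n+1) q - f0 q| := by
      intro n
      have int1 : IntegrableOn (fun q => |fn n q - f0 q|) S :=
        ((((fn_cont n).integrable_of_hasCompactSupport (fn_cs n)).integrableOn).sub
          hf0_int).abs
      have int2 : IntegrableOn (fun q => |fn n q - h (n+1) q|) S :=
        ((((fn_cont n).integrable_of_hasCompactSupport (fn_cs n)).integrableOn).sub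
          (hhS_int (n+1))).abs
      have int3 : IntegrableOn (fun q => |h (n+1) q - f0 q|) S :=
        ((hhS_int (n+1)).sub hf0_int).abs
      have tri : ∀ q, |fn n q - f0 q| ≤ |fn n q - h (n+1) q| + |h (n+1) q - f0 q| := by
        intro q
        calc |fn n q - f0 q| = |(fn n q - h (n+1) q) + (h (n+1) q - f0 q)| := by ring_nf
          _ ≤ |fn n q - h (n+1) q| + |h (n+1) q - f0 q| := abs_add_le _ _
      calc (∫ q in S, |fn n q - f0 q|)
          ≤ ∫ q in S, (|fn n q - h (n+1) q| + |h (n+1) q - f0 q|) :=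
            integral_mono int1 (int2.add int3) tri
        _ = (∫ q in S, |fn n q - h (n+1) q|) + ∫ q in S, |h (n+1) q - f0 q| :=
            integral_add int2 int3
        _ ≤ 1/((n:ℝ)+1) + ∫ q in S, |h (n+1) q - f0 q| := by
            have := fn_B1 n
            linarith
    have hlim : Tendsto (fun n : ℕ => 1/((n:ℝ)+1) + ∫ q in S, |h (n+1) q - f0 q|)
        atTop (𝓝 0) := by
      have l1 : Tendsto (fun n : ℕ => 1/((n:ℝ)+1)) atTop (𝓝 0) :=
        tendsto_one_div_add_atTop_nhds_zero_nat
      have l2 : Tendsto (fun n : ℕ => ∫ q in S, |h (n+1) q - f0 q|) atTop (𝓝 0) :=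
        T1.comp (tendsto_add_atTop_nat 1)
      have l3 := l1.add l2
      rw [add_zero] at l3
      exact l3
    exact squeeze_zero (fun n => integral_nonneg fun q => abs_nonneg _) hbound hlim
  · -- entropy convergence
    refine tendsto_iff_dist_tendsto_zero.2 ?_
    have hbound : ∀ n : ℕ, dist (∫ q in S, fn n q * Real.log (fn n q))
        (∫ q in S, f0 q * Real.log (f0 q))
        ≤ 1/((n:ℝ)+1) + dist (∫ q in S, h (n+1) q * Real.log (h (n+1) q))
          (∫ q in S, f0 q * Real.log (f0 q)) := by
      intro n
      rw [Real.dist_eq, Real.dist_eq]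
      have := fn_B3 n
      have tri := abs_sub_le (∫ q in S, fn n q * Real.log (fn n q))
        (∫ q in S, h (n+1) q * Real.log (h (n+1) q))
        (∫ q in S, f0 q * Real.log (f0 q))
      linarith
    have hlim : Tendsto (fun n : ℕ => 1/((n:ℝ)+1)
        + dist (∫ q in S, h (n+1) q * Real.log (h (n+1) q))
          (∫ q in S, f0 q * Real.log (f0 q))) atTop (𝓝 0) := by
      have l1 : Tendsto (fun n : ℕ => 1/((n:ℝ)+1)) atTop (𝓝 0) :=
        tendsto_one_div_add_atTop_nhds_zero_nat
      have l2 : Tendsto (fun n : ℕ => dist (∫ q in S, h (n+1) q * Real.log (h (n+1) q))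
          (∫ q in S, f0 q * Real.log (f0 q))) atTop (𝓝 0) :=
        tendsto_iff_dist_tendsto_zero.1 (T2.comp (tendsto_add_atTop_nat 1))
      have l3 := l1.add l2
      rw [add_zero] at l3
      exact l3
    exact squeeze_zero (fun n => dist_nonneg) hbound hlim
  · -- energy convergence
    refine tendsto_iff_dist_tendsto_zero.2 ?_
    have hbound : ∀ n : ℕ, dist (∫ q in S, ‖q.2‖ ^ 2 * fn n q)
        (∫ q in S, ‖q.2‖ ^ 2 * f0 q)
        ≤ 1/((n:ℝ)+1) + dist (∫ q in S, ‖q.2‖ ^ 2 * h (n+1) q)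
          (∫ q in S, ‖q.2‖ ^ 2 * f0 q) := by
      intro n
      rw [Real.dist_eq, Real.dist_eq]
      have := fn_B2 n
      have tri := abs_sub_le (∫ q in S, ‖q.2‖ ^ 2 * fn n q)
        (∫ q in S, ‖q.2‖ ^ 2 * h (n+1) q)
        (∫ q in S, ‖q.2‖ ^ 2 * f0 q)
      linarith
    have hlim : Tendsto (fun n : ℕ => 1/((n:ℝ)+1)
        + dist (∫ q in S, ‖q.2‖ ^ 2 * h (n+1) q)
          (∫ q in S, ‖q.2‖ ^ 2 * f0 q)) atTop (𝓝 0) := by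
      have l1 : Tendsto (fun n : ℕ => 1/((n:ℝ)+1)) atTop (𝓝 0) :=
        tendsto_one_div_add_atTop_nhds_zero_nat
      have l2 : Tendsto (fun n : ℕ => dist (∫ q in S, ‖q.2‖ ^ 2 * h (n+1) q)
          (∫ q in S, ‖q.2‖ ^ 2 * f0 q)) atTop (𝓝 0) :=
        tendsto_iff_dist_tendsto_zero.1 (T3.comp (tendsto_add_atTop_nat 1))
      have l3 := l1.add l2
      rw [add_zero] at l3
      exact l3
    exact squeeze_zero (fun n => dist_nonneg) hbound hlim
end

section
/- Uniform smallness of the negative part of the entropy on large-velocity tails (estimate (eq: FLOGF) proved in Appendix A of the paper). Let d ≥ 1 and let Ω ⊆ ℝ^d be a measurable set of finite Lebesgue measure. Let ζ ∈ (d/(d+2), 1). Then there exists a constant C > 0, depending only on d and ζ, such that for every measurable f : Ω×ℝ^d → [0,∞) with M := ∫_{Ω×ℝ^d} (1+|v|²) f(x,v) dx dv < ∞ and every R ≥ 0, one has ∫_{Ω×{|v|≥R}} |min{f(x,v) log f(x,v), 0}| dx dv ≤ C · M^ζ · (Leb(Ω))^{1−ζ} · (1+R²)^{−(ζ − (d/2)(1−ζ))}.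 Note that the exponent ζ − (d/2)(1−ζ) is positive since ζ > d/(d+2), so this tail quantity tends to 0 as R → ∞ uniformly over all f with ∫(1+|v|²)f ≤ M. -/
open MeasureTheory

lemma neg_part_entropy_le {ζ : ℝ} (hζ0 : 0 < ζ) (hζ1 : ζ < 1) {t : ℝ} (ht : 0 ≤ t) :
    |min (t * Real.log t) 0| ≤ (1 - ζ)⁻¹ * t ^ ζ := by
  have h1ζ : (0:ℝ) < 1 - ζ := by linarith
  rcases eq_or_lt_of_le ht with h0 | htpos
  · simp [← h0]
    positivity
  rcases le_or_gt 1 t with h1 | h1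
  · have hlog : 0 ≤ Real.log t := Real.log_nonneg h1
    have : min (t * Real.log t) 0 = 0 := min_eq_right (by positivity)
    rw [this, abs_zero]
    positivity
  · -- 0 < t < 1
    have hlog : Real.log t ≤ 0 := Real.log_nonpos ht h1.le
    have hmin : min (t * Real.log t) 0 = t * Real.log t :=
      min_eq_left (mul_nonpos_of_nonneg_of_nonpos ht hlog)
    rw [hmin, abs_of_nonpos (mul_nonpos_of_nonneg_of_nonpos ht hlog)]
    -- -(t log t) = t * (-log t) ≤ t * (1-ζ)⁻¹ t^(ζ-1)
    have key : -Real.log t ≤ (1 - ζ)⁻¹ * t ^ (ζ - 1) := by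
      have h2 : Real.log (t ^ (ζ - 1)) ≤ t ^ (ζ - 1) - 1 :=
        Real.log_le_sub_one_of_pos (Real.rpow_pos_of_pos htpos _)
      rw [Real.log_rpow htpos] at h2
      have h3 : (ζ - 1) * Real.log t ≤ t ^ (ζ - 1) := by
        have : (0:ℝ) < t ^ (ζ - 1) := Real.rpow_pos_of_pos htpos _
        linarith
      rw [← mul_le_mul_iff_right₀ h1ζ]
      calc (1 - ζ) * -Real.log t = (ζ - 1) * Real.log t := by ring
        _ ≤ t ^ (ζ - 1) := h3
        _ = (1 - ζ) * ((1 - ζ)⁻¹ * t ^ (ζ - 1)) := by field_simp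
    calc -(t * Real.log t) = t * -Real.log t := by ring
      _ ≤ t * ((1 - ζ)⁻¹ * t ^ (ζ - 1)) := by
          exact mul_le_mul_of_nonneg_left key ht
      _ = (1 - ζ)⁻¹ * (t ^ (ζ - 1) * t) := by ring
      _ = (1 - ζ)⁻¹ * t ^ ζ := by
          congr 1
          calc t ^ (ζ - 1) * t = t ^ (ζ - 1) * t ^ (1:ℝ) := by rw [Real.rpow_one]
            _ = t ^ (ζ - 1 + 1) := (Real.rpow_add htpos _ _).symm
            _ = t ^ ζ := by ring_nf
open MeasureTheory

lemma tail_lintegral_bound (d : ℕ) {s : ℝ} (hs : (d:ℝ) < 2 * s) (hs0 : 0 < s)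
    (R : ℝ) (hR : 0 ≤ R) :
    (∫⁻ v in {v : EuclideanSpace ℝ (Fin d) | R ≤ ‖v‖},
        ENNReal.ofReal ((1 + ‖v‖ ^ 2) ^ (-s))) ≤
      ENNReal.ofReal ((4:ℝ) ^ s * (1 + R ^ 2) ^ (((d:ℝ) - 2*s)/2)) *
        ∫⁻ w : EuclideanSpace ℝ (Fin d), ENNReal.ofReal ((1 + ‖w‖) ^ (-(2*s))) := by
  set E := EuclideanSpace ℝ (Fin d)
  set lam : ℝ := Real.sqrt (1 + R ^ 2) with hlam_def
  have h1R : (0:ℝ) < 1 + R ^ 2 := by positivity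
  have hlam0 : 0 < lam := Real.sqrt_pos.mpr h1R
  have hlam2 : lam ^ 2 = 1 + R ^ 2 := Real.sq_sqrt h1R.le
  have hmeas : Measurable fun v : E => ENNReal.ofReal ((lam + ‖v‖) ^ (-(2*s))) := by
    fun_prop
  -- pointwise bound on the tail
  have hpt : ∀ v : E, R ≤ ‖v‖ →
      ENNReal.ofReal ((1 + ‖v‖ ^ 2) ^ (-s)) ≤
        ENNReal.ofReal ((4:ℝ) ^ s * (lam + ‖v‖) ^ (-(2*s))) := by
    intro v hv
    have h1v : (0:ℝ) < 1 + ‖v‖ ^ 2 := by positivity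
    apply ENNReal.ofReal_le_ofReal
    have hb : (0:ℝ) < (lam + ‖v‖) ^ 2 / 4 := by positivity
    have hcmp : (lam + ‖v‖) ^ 2 / 4 ≤ 1 + ‖v‖ ^ 2 := by
      nlinarith [sq_nonneg (lam - ‖v‖), sq_nonneg (R - ‖v‖), hlam2, norm_nonneg v]
    have := Real.rpow_le_rpow_of_nonpos hb hcmp (neg_nonpos.mpr hs0.le)
    calc (1 + ‖v‖ ^ 2) ^ (-s) ≤ ((lam + ‖v‖) ^ 2 / 4) ^ (-s) := this
      _ = (4:ℝ) ^ s * (lam + ‖v‖) ^ (-(2*s)) := by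
          rw [Real.div_rpow (by positivity) (by norm_num)]
          rw [Real.rpow_neg (by norm_num : (0:ℝ) ≤ 4)]
          rw [div_eq_mul_inv, inv_inv, mul_comm]
          congr 1
          rw [← Real.rpow_natCast (lam + ‖v‖) 2, ← Real.rpow_mul (by positivity)]
          norm_num
  -- scaling identity
  have hmap := MeasureTheory.Measure.map_addHaar_smul (volume : Measure E) hlam0.ne'
  have key := (lintegral_map (μ := (volume : Measure E)) hmeas (measurable_const_smul lam)).symm
  rw [hmap, lintegral_smul_measure] at key
  -- key : ∫⁻ w, F (lam • w) = ofReal |(lam ^ finrank)⁻¹| * ∫⁻ F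
  have hrank : Module.finrank ℝ E = d := finrank_euclideanSpace_fin
  rw [hrank] at key
  have hsub : ∀ w : E, ENNReal.ofReal ((lam + ‖lam • w‖) ^ (-(2*s))) =
      ENNReal.ofReal (lam ^ (-(2*s))) * ENNReal.ofReal ((1 + ‖w‖) ^ (-(2*s))) := by
    intro w
    rw [norm_smul, Real.norm_eq_abs, abs_of_pos hlam0, ← ENNReal.ofReal_mul (by positivity)]
    congr 1
    rw [← Real.mul_rpow hlam0.le (by positivity)]
    congr 1
    ring
  simp only [hsub] at key
  rw [lintegral_const_mul _ (by fun_prop)] at key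
  have habs : |((lam ^ d : ℝ))⁻¹| = (lam ^ d)⁻¹ := abs_of_pos (by positivity)
  rw [habs] at key
  -- deduce value of the full-space integral
  have hI2 : (∫⁻ v : E, ENNReal.ofReal ((lam + ‖v‖) ^ (-(2*s)))) =
      ENNReal.ofReal (lam ^ d * lam ^ (-(2*s))) *
        ∫⁻ w : E, ENNReal.ofReal ((1 + ‖w‖) ^ (-(2*s))) := by
    have h2 := congrArg (fun x => ENNReal.ofReal (lam ^ d) * x) key
    rw [smul_eq_mul, ← mul_assoc, ← mul_assoc, ← ENNReal.ofReal_mul (by positivity),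
      ← ENNReal.ofReal_mul (by positivity),
      mul_inv_cancel₀ (by positivity : (lam:ℝ) ^ d ≠ 0), ENNReal.ofReal_one, one_mul] at h2
    exact h2.symm
  -- put everything together
  calc (∫⁻ v in {v : E | R ≤ ‖v‖}, ENNReal.ofReal ((1 + ‖v‖ ^ 2) ^ (-s)))
      ≤ ∫⁻ v in {v : E | R ≤ ‖v‖}, ENNReal.ofReal ((4:ℝ) ^ s * (lam + ‖v‖) ^ (-(2*s))) := by
        apply setLIntegral_mono (by fun_prop)
        intro v hv; exact hpt v hv
    _ ≤ ∫⁻ v : E, ENNReal.ofReal ((4:ℝ) ^ s * (lam + ‖v‖) ^ (-(2*s))) :=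
        setLIntegral_le_lintegral _ _
    _ = ENNReal.ofReal ((4:ℝ) ^ s) * ∫⁻ v : E, ENNReal.ofReal ((lam + ‖v‖) ^ (-(2*s))) := by
        simp_rw [ENNReal.ofReal_mul (by positivity : (0:ℝ) ≤ (4:ℝ) ^ s)]
        rw [lintegral_const_mul _ hmeas]
    _ = ENNReal.ofReal ((4:ℝ) ^ s) * (ENNReal.ofReal (lam ^ d * lam ^ (-(2*s))) *
          ∫⁻ w : E, ENNReal.ofReal ((1 + ‖w‖) ^ (-(2*s)))) := by rw [hI2]
    _ = ENNReal.ofReal ((4:ℝ) ^ s * (1 + R ^ 2) ^ (((d:ℝ) - 2*s)/2)) *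
          ∫⁻ w : E, ENNReal.ofReal ((1 + ‖w‖) ^ (-(2*s))) := by
        rw [← mul_assoc, ← ENNReal.ofReal_mul (by positivity)]
        congr 2
        rw [← Real.rpow_natCast lam d, ← Real.rpow_add hlam0,
          hlam_def, Real.sqrt_eq_rpow, ← Real.rpow_mul h1R.le]
        ring_nf

open scoped ENNReal

/-- **Uniform smallness of the negative part of the entropy on large-velocity tails**
(estimate (eq: FLOGF) of the paper). For `ζ ∈ (d/(d+2), 1)` there is a constant `C > 0`,
depending only on `d` and `ζ`, such that for every measurable set `Ω ⊆ ℝ^d` of finite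
measure, every measurable `f ≥ 0` with `∫_{Ω×ℝ^d} (1+|v|²) f = M < ∞`, and every `R ≥ 0`,
`∫_{Ω×{|v|≥R}} |min(f log f, 0)| ≤ C M^ζ (Leb Ω)^{1-ζ} (1+R²)^{-(ζ - (d/2)(1-ζ))}`. -/
theorem entropy_negative_part_tail_estimate
    (d : ℕ) (hd : 1 ≤ d) (ζ : ℝ) (hζ_lb : (d : ℝ) / (d + 2) < ζ) (hζ_ub : ζ < 1) :
    ∃ C : ℝ, 0 < C ∧
      ∀ (Ω : Set (EuclideanSpace ℝ (Fin d))), MeasurableSet Ω → volume Ω < ⊤ →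
        ∀ f : EuclideanSpace ℝ (Fin d) × EuclideanSpace ℝ (Fin d) → ℝ,
          Measurable f → (∀ q, 0 ≤ f q) →
          ∀ M : ℝ, 0 ≤ M →
          (∫⁻ q in Ω ×ˢ (Set.univ : Set (EuclideanSpace ℝ (Fin d))),
              ENNReal.ofReal ((1 + ‖q.2‖ ^ 2) * f q)) = ENNReal.ofReal M →
          ∀ R : ℝ, 0 ≤ R →
          (∫⁻ q in Ω ×ˢ {v : EuclideanSpace ℝ (Fin d) | R ≤ ‖v‖},
              ENNReal.ofReal |min (f q * Real.log (f q)) 0|) ≤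
            ENNReal.ofReal (C * M ^ ζ * (volume Ω).toReal ^ (1 - ζ) *
              (1 + R ^ 2) ^ (-(ζ - ((d : ℝ) / 2) * (1 - ζ)))) := by
  have hd2 : (0:ℝ) < (d:ℝ) + 2 := by positivity
  have hζ0 : 0 < ζ := lt_of_le_of_lt (by positivity) hζ_lb
  have h1ζ : (0:ℝ) < 1 - ζ := by linarith
  set E := EuclideanSpace ℝ (Fin d) with hE_def
  set s : ℝ := ζ / (1 - ζ) with hs_def
  have hs0 : 0 < s := div_pos hζ0 h1ζ
  have hsζ : s * (1 - ζ) = ζ := div_mul_cancel₀ ζ h1ζ.ne'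
  have hds : (d:ℝ) < 2 * s := by
    have h' : (d:ℝ) < ζ * ((d:ℝ) + 2) := (div_lt_iff₀ hd2).mp hζ_lb
    rw [show 2 * s = 2 * ζ / (1 - ζ) by rw [hs_def]; ring, lt_div_iff₀ h1ζ]
    nlinarith
  set J : ℝ≥0∞ := ∫⁻ w : E, ENNReal.ofReal ((1 + ‖w‖) ^ (-(2*s))) with hJ_def
  have hJ : J < ⊤ := by
    have h := finite_integral_one_add_norm
      (μ := (volume : Measure (EuclideanSpace ℝ (Fin d)))) (r := 2*s)
      (by rw [finrank_euclideanSpace_fin]; exact hds)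
    exact h
  set K : ℝ := J.toReal + 1 with hK_def
  have hK0 : 0 < K := by positivity
  have hK : J ≤ ENNReal.ofReal K := by
    rw [← ENNReal.ofReal_toReal hJ.ne]
    exact ENNReal.ofReal_le_ofReal (by linarith)
  refine ⟨(1 - ζ)⁻¹ * ((4:ℝ) ^ s * K) ^ (1 - ζ), by positivity, ?_⟩
  intro Ω hΩm hΩfin f hf hf0 M hM0 hMint R hR
  set S : Set E := {v : E | R ≤ ‖v‖} with hS_def
  set A : Set (E × E) := Ω ×ˢ S with hA_def
  set F : E × E → ℝ≥0∞ := fun q => ENNReal.ofReal ((1 + ‖q.2‖ ^ 2) * f q) with hF_def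
  set G : E × E → ℝ≥0∞ := fun q => ENNReal.ofReal ((1 + ‖q.2‖ ^ 2) ^ (-ζ)) with hG_def
  have hFmeas : Measurable F := by
    apply Measurable.ennreal_ofReal
    fun_prop
  have hGmeas : Measurable G := by
    rw [hG_def]; fun_prop
  -- Step 1: pointwise entropy bound
  have step1 : (∫⁻ q in A, ENNReal.ofReal |min (f q * Real.log (f q)) 0|) ≤
      ENNReal.ofReal (1 - ζ)⁻¹ * ∫⁻ q in A, ENNReal.ofReal (f q ^ ζ) := by
    have hpt : ∀ q : E × E, ENNReal.ofReal |min (f q * Real.log (f q)) 0| ≤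
        ENNReal.ofReal (1 - ζ)⁻¹ * ENNReal.ofReal (f q ^ ζ) := by
      intro q
      rw [← ENNReal.ofReal_mul (by positivity)]
      exact ENNReal.ofReal_le_ofReal (neg_part_entropy_le hζ0 hζ_ub (hf0 q))
    calc (∫⁻ q in A, ENNReal.ofReal |min (f q * Real.log (f q)) 0|)
        ≤ ∫⁻ q in A, ENNReal.ofReal (1 - ζ)⁻¹ * ENNReal.ofReal (f q ^ ζ) :=
          lintegral_mono hpt
      _ = ENNReal.ofReal (1 - ζ)⁻¹ * ∫⁻ q in A, ENNReal.ofReal (f q ^ ζ) :=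
          lintegral_const_mul _ (by fun_prop)
  -- Step 2: pointwise factorization
  have hfact : ∀ q : E × E, ENNReal.ofReal (f q ^ ζ) = F q ^ ζ * G q := by
    intro q
    have hn : (0:ℝ) < 1 + ‖q.2‖ ^ 2 := by positivity
    have hre : f q ^ ζ = ((1 + ‖q.2‖ ^ 2) * f q) ^ ζ * (1 + ‖q.2‖ ^ 2) ^ (-ζ) := by
      rw [Real.mul_rpow hn.le (hf0 q), mul_comm ((1 + ‖q.2‖ ^ 2) ^ ζ), mul_assoc,
        ← Real.rpow_add hn]
      simp
    have hb0 : 0 ≤ (1 + ‖q.2‖ ^ 2) * f q := mul_nonneg hn.le (hf0 q)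
    rw [hre, ENNReal.ofReal_mul (Real.rpow_nonneg hb0 ζ)]
    simp only [hF_def, hG_def]
    rw [ENNReal.ofReal_rpow_of_nonneg hb0 hζ0.le]
  -- Step 3: Hölder
  have hpq : Real.HolderConjugate (1/ζ) (1/(1-ζ)) :=
    Real.holderConjugate_one_div hζ0 h1ζ (by ring)
  have hFζeq : (fun q : E × E => F q ^ ζ) =
      fun q => ENNReal.ofReal (((1 + ‖q.2‖ ^ 2) * f q) ^ ζ) := funext fun q =>
    ENNReal.ofReal_rpow_of_nonneg (mul_nonneg (by positivity) (hf0 q)) hζ0.le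
  have hFζmeas : Measurable fun q : E × E => F q ^ ζ := by
    rw [hFζeq]; fun_prop
  have holder := ENNReal.lintegral_mul_le_Lp_mul_Lq (volume.restrict A) hpq
    hFζmeas.aemeasurable hGmeas.aemeasurable
  simp only [Pi.mul_apply] at holder
  have hFp : ∀ q : E × E, (F q ^ ζ) ^ (1/ζ) = F q := by
    intro q
    rw [← ENNReal.rpow_mul, mul_one_div_cancel hζ0.ne', ENNReal.rpow_one]
  have hGq : ∀ q : E × E, G q ^ (1/(1-ζ)) =
      ENNReal.ofReal ((1 + ‖q.2‖ ^ 2) ^ (-s)) := by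
    intro q
    have hn : (0:ℝ) < 1 + ‖q.2‖ ^ 2 := by positivity
    simp only [hG_def]
    rw [ENNReal.ofReal_rpow_of_pos (Real.rpow_pos_of_pos hn _)]
    congr 1
    rw [← Real.rpow_mul hn.le]
    congr 1
    rw [hs_def]
    ring
  simp only [hFp, hGq, one_div_one_div] at holder
  -- bound the F-factor
  have hFbound : (∫⁻ q in A, F q) ≤ ENNReal.ofReal M := by
    rw [← hMint]
    apply lintegral_mono_set
    rw [hA_def]
    exact Set.prod_mono_right (Set.subset_univ S)
  -- compute/bound the G-factor
  have hGbound : (∫⁻ q in A, ENNReal.ofReal ((1 + ‖q.2‖ ^ 2) ^ (-s))) ≤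
      volume Ω * ENNReal.ofReal ((4:ℝ) ^ s * (1 + R ^ 2) ^ (((d:ℝ) - 2*s)/2) * K) := by
    have hφ : Measurable fun v : E => ENNReal.ofReal ((1 + ‖v‖ ^ 2) ^ (-s)) := by
      fun_prop
    have hprod : (volume : Measure (E × E)).restrict A =
        (volume.restrict Ω).prod (volume.restrict S) := by
      rw [hA_def, Measure.volume_eq_prod, ← Measure.prod_restrict]
    rw [hprod]
    have hmapsnd : (∫⁻ q : E × E, ENNReal.ofReal ((1 + ‖q.2‖ ^ 2) ^ (-s))
        ∂((volume.restrict Ω).prod (volume.restrict S))) =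
        volume Ω * ∫⁻ v in S, ENNReal.ofReal ((1 + ‖v‖ ^ 2) ^ (-s)) := by
      have h1 : (∫⁻ q : E × E, ENNReal.ofReal ((1 + ‖q.2‖ ^ 2) ^ (-s))
          ∂((volume.restrict Ω).prod (volume.restrict S))) =
          ∫⁻ v, ENNReal.ofReal ((1 + ‖v‖ ^ 2) ^ (-s))
            ∂(Measure.map Prod.snd ((volume.restrict Ω).prod (volume.restrict S))) :=
        (lintegral_map hφ measurable_snd).symm
      rw [h1, Measure.map_snd_prod, lintegral_smul_measure, Measure.restrict_apply_univ, smul_eq_mul]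
    rw [hmapsnd]
    apply mul_le_mul_right
    calc (∫⁻ v in S, ENNReal.ofReal ((1 + ‖v‖ ^ 2) ^ (-s)))
        ≤ ENNReal.ofReal ((4:ℝ) ^ s * (1 + R ^ 2) ^ (((d:ℝ) - 2*s)/2)) * J :=
          tail_lintegral_bound d hds hs0 R hR
      _ ≤ ENNReal.ofReal ((4:ℝ) ^ s * (1 + R ^ 2) ^ (((d:ℝ) - 2*s)/2)) *
            ENNReal.ofReal K := mul_le_mul_right hK _
      _ = ENNReal.ofReal ((4:ℝ) ^ s * (1 + R ^ 2) ^ (((d:ℝ) - 2*s)/2) * K) := by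
          rw [← ENNReal.ofReal_mul (by positivity)]
  -- combine
  set B : ℝ := (4:ℝ) ^ s * (1 + R ^ 2) ^ (((d:ℝ) - 2*s)/2) * K with hB_def
  have hB0 : 0 < B := by positivity
  have main : (∫⁻ q in A, ENNReal.ofReal |min (f q * Real.log (f q)) 0|) ≤
      ENNReal.ofReal (1 - ζ)⁻¹ * ((ENNReal.ofReal M) ^ ζ *
        (volume Ω * ENNReal.ofReal B) ^ (1 - ζ)) := by
    refine step1.trans ?_
    apply mul_le_mul_right
    calc (∫⁻ q in A, ENNReal.ofReal (f q ^ ζ)) = ∫⁻ q in A, F q ^ ζ * G q := by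
          simp_rw [hfact]
      _ ≤ (∫⁻ q in A, F q) ^ ζ *
            (∫⁻ q in A, ENNReal.ofReal ((1 + ‖q.2‖ ^ 2) ^ (-s))) ^ (1 - ζ) := holder
      _ ≤ (ENNReal.ofReal M) ^ ζ * (volume Ω * ENNReal.ofReal B) ^ (1 - ζ) := by
          apply mul_le_mul'
          · exact ENNReal.rpow_le_rpow hFbound hζ0.le
          · exact ENNReal.rpow_le_rpow hGbound h1ζ.le
  refine main.trans (le_of_eq ?_)
  -- final algebraic identification
  have hexp : ((d:ℝ) - 2*s)/2 * (1 - ζ) = -(ζ - ((d:ℝ)/2) * (1 - ζ)) := by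
    linear_combination (-1 : ℝ) * hsζ
  have hBpow : B ^ (1 - ζ) =
      ((4:ℝ) ^ s * K) ^ (1 - ζ) * (1 + R ^ 2) ^ (-(ζ - ((d:ℝ)/2) * (1 - ζ))) := by
    rw [show B = ((4:ℝ) ^ s * K) * (1 + R ^ 2) ^ (((d:ℝ) - 2*s)/2) by rw [hB_def]; ring,
      Real.mul_rpow (by positivity) (by positivity), ← Real.rpow_mul (by positivity), hexp]
  rw [ENNReal.mul_rpow_of_nonneg _ _ h1ζ.le,
    ENNReal.ofReal_rpow_of_pos hB0,
    ENNReal.ofReal_rpow_of_nonneg hM0 hζ0.le,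
    show (volume Ω : ℝ≥0∞) ^ (1 - ζ) =
        ENNReal.ofReal ((volume Ω).toReal ^ (1 - ζ)) by
      rw [← ENNReal.ofReal_rpow_of_nonneg ENNReal.toReal_nonneg h1ζ.le,
        ENNReal.ofReal_toReal hΩfin.ne],
    ← ENNReal.ofReal_mul (by positivity),
    ← ENNReal.ofReal_mul (by positivity),
    ← ENNReal.ofReal_mul (by positivity)]
  congr 1
  rw [hBpow]
  ring
end
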